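/- arXiv:1807.04187 — 5 statements merged into one kernel-verified Lean document; each statement's English description precedes it below -/
import Mathlib

section
/- The numerical semigroup generated by p^3, p^3+p^2, p^4+p^3+p^2+p, and p^5+p^4+p^3+p^2+p+1 (for p a prime, or any integer p ≥ 2) has these four elements as its minimal system of generators, i.e., none of these generators lies in the semigroup generated by the other three. -/
lemma mem3 {x y z n : ℕ} (h : n ∈ AddSubmonoid.closure ({x, y, z} : Set ℕ)) :
    ∃ m k l : ℕ, n = m * x + k * y + l * z := by
  induction h using AddSubmonoid.closure_induction with
  | mem w hw =>
    rcases hw with rfl | rfl | rfl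
    exacts [⟨1, 0, 0, by ring⟩, ⟨0, 1, 0, by ring⟩, ⟨0, 0, 1, by ring⟩]
  | zero => exact ⟨0, 0, 0, by ring⟩
  | add u v hu hv ihu ihv =>
    obtain ⟨m, k, l, rfl⟩ := ihu
    obtain ⟨m', k', l', rfl⟩ := ihv
    exact ⟨m + m', k + k', l + l', by ring⟩

/-- The numerical semigroup generated by `p^3`, `p^3+p^2`, `p^4+p^3+p^2+p`,
`p^5+p^4+p^3+p^2+p+1` (for any integer `p ≥ 2`) has these four elements as a minimal
system of generators: none of them lies in the submonoid generated by the other three. -/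
theorem stmt0 (p : ℕ) (hp : 2 ≤ p) :
    let a := p ^ 3
    let b := p ^ 3 + p ^ 2
    let c := p ^ 4 + p ^ 3 + p ^ 2 + p
    let d := p ^ 5 + p ^ 4 + p ^ 3 + p ^ 2 + p + 1
    a ∉ AddSubmonoid.closure ({b, c, d} : Set ℕ) ∧
    b ∉ AddSubmonoid.closure ({a, c, d} : Set ℕ) ∧
    c ∉ AddSubmonoid.closure ({a, b, d} : Set ℕ) ∧
    d ∉ AddSubmonoid.closure ({a, b, c} : Set ℕ) := by
  intro a b c d
  have hp2 : 2 ≤ p ^ 2 := by nlinarith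
  have hp3 : p ^ 2 < p ^ 3 := by nlinarith
  have hpp : p < p ^ 2 := by nlinarith
  have hp4 : p ^ 3 < p ^ 4 := by nlinarith
  have hp5 : p ^ 4 < p ^ 5 := by nlinarith
  refine ⟨?_, ?_, ?_, ?_⟩
  · -- a ∉ ⟨b, c, d⟩
    intro h
    obtain ⟨m, k, l, heq⟩ := mem3 h
    simp only [a, b, c, d] at heq
    rcases Nat.eq_zero_or_pos m with hm | hm
    · rcases Nat.eq_zero_or_pos k with hk | hk
      · rcases Nat.eq_zero_or_pos l with hl | hl
        · subst hm hk hl; simp at heq; nlinarith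
        · have hle : p ^ 5 + p ^ 4 + p ^ 3 + p ^ 2 + p + 1
              ≤ l * (p ^ 5 + p ^ 4 + p ^ 3 + p ^ 2 + p + 1) :=
            Nat.le_mul_of_pos_left _ hl
          nlinarith
      · have hle : p ^ 4 + p ^ 3 + p ^ 2 + p ≤ k * (p ^ 4 + p ^ 3 + p ^ 2 + p) :=
          Nat.le_mul_of_pos_left _ hk
        nlinarith
    · have hle : p ^ 3 + p ^ 2 ≤ m * (p ^ 3 + p ^ 2) := Nat.le_mul_of_pos_left _ hm
      nlinarith
  · -- b ∉ ⟨a, c, d⟩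
    intro h
    obtain ⟨m, k, l, heq⟩ := mem3 h
    simp only [a, b, c, d] at heq
    rcases Nat.eq_zero_or_pos k with hk | hk
    swap
    · have hle : p ^ 4 + p ^ 3 + p ^ 2 + p ≤ k * (p ^ 4 + p ^ 3 + p ^ 2 + p) :=
        Nat.le_mul_of_pos_left _ hk
      nlinarith
    rcases Nat.eq_zero_or_pos l with hl | hl
    swap
    · have hle : p ^ 5 + p ^ 4 + p ^ 3 + p ^ 2 + p + 1
          ≤ l * (p ^ 5 + p ^ 4 + p ^ 3 + p ^ 2 + p + 1) :=
        Nat.le_mul_of_pos_left _ hl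
      nlinarith
    subst hk hl
    simp only [zero_mul, add_zero] at heq
    -- p^3 + p^2 = m * p^3
    match m with
    | 0 => simp at heq; nlinarith
    | 1 => simp at heq; nlinarith
    | (n + 2) => nlinarith [Nat.zero_le (n * p ^ 3)]
  · -- c ∉ ⟨a, b, d⟩
    intro h
    obtain ⟨m, k, l, heq⟩ := mem3 h
    simp only [a, b, c, d] at heq
    rcases Nat.eq_zero_or_pos l with hl | hl
    swap
    · have hle : p ^ 5 + p ^ 4 + p ^ 3 + p ^ 2 + p + 1
          ≤ l * (p ^ 5 + p ^ 4 + p ^ 3 + p ^ 2 + p + 1) :=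
        Nat.le_mul_of_pos_left _ hl
      nlinarith
    subst hl
    simp only [zero_mul, add_zero] at heq
    -- p^4+p^3+p^2+p = p^2 * (m*p + k*p + k)
    have heq2 : p ^ 4 + p ^ 3 + p ^ 2 + p = p ^ 2 * (m * p + k * p + k) := by
      rw [heq]; ring
    set t := m * p + k * p + k with ht
    have hr : p ^ 2 * (p ^ 2 + p + 1) = p ^ 4 + p ^ 3 + p ^ 2 := by ring
    have h1 : p ^ 2 + p + 1 < t := by
      by_contra hcon
      push_neg at hcon
      have := Nat.mul_le_mul_left (p ^ 2) hcon
      omega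
    have h2 : p ^ 2 + p + 2 ≤ t := h1
    have := Nat.mul_le_mul_left (p ^ 2) h2
    have hr2 : p ^ 2 * (p ^ 2 + p + 2) = p ^ 4 + p ^ 3 + p ^ 2 + p ^ 2 := by ring
    omega
  · -- d ∉ ⟨a, b, c⟩
    intro h
    obtain ⟨m, k, l, heq⟩ := mem3 h
    simp only [a, b, c, d] at heq
    have heq2 : p ^ 5 + p ^ 4 + p ^ 3 + p ^ 2 + p + 1
        = p * (m * p ^ 2 + k * p ^ 2 + k * p + l * p ^ 3 + l * p ^ 2 + l * p + l) := by
      rw [heq]; ring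
    set t := m * p ^ 2 + k * p ^ 2 + k * p + l * p ^ 3 + l * p ^ 2 + l * p + l with ht
    have hr : p * (p ^ 4 + p ^ 3 + p ^ 2 + p + 1) = p ^ 5 + p ^ 4 + p ^ 3 + p ^ 2 + p := by
      ring
    have h1 : p ^ 4 + p ^ 3 + p ^ 2 + p + 1 < t := by
      by_contra hcon
      push_neg at hcon
      have := Nat.mul_le_mul_left p hcon
      omega
    have h2 : p ^ 4 + p ^ 3 + p ^ 2 + p + 2 ≤ t := h1
    have := Nat.mul_le_mul_left p h2
    have hr2 : p * (p ^ 4 + p ^ 3 + p ^ 2 + p + 2) = p ^ 5 + p ^ 4 + p ^ 3 + p ^ 2 + p + p := by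
      ring
    omega
end

section
/- Let k be a field of characteristic 2. In k[[x,y,u]], the element u^2 - x^6 y does not belong to the ideal generated by y^2 - x^3 and u^4 - x^15, but its square (u^2 - x^6 y)^2 does belong to that ideal. In particular the ideal (y^2 - x^3, u^4 - x^15) is not a radical (hence not a prime) ideal. -/
open MvPowerSeries Finsupp

lemma coeff_mul_Xpow_eq_zero {k : Type*} [Field k] (a : MvPowerSeries (Fin 3) k)
    (s : Fin 3) (n : ℕ) (e : Fin 3 →₀ ℕ) (h : ¬ Finsupp.single s n ≤ e) :
    MvPowerSeries.coeff e (a * (MvPowerSeries.X s ^ n)) = 0 := by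
  rw [X_pow_eq, coeff_mul_monomial, if_neg h]

/-- Over a field of characteristic 2, in `k[[x,y,u]]` the element `u^2 - x^6 y` is not in
the ideal `(y^2 - x^3, u^4 - x^15)`, but its square is; hence that ideal is not radical
and not prime. -/
theorem stmt3 (k : Type*) [Field k] [CharP k 2] :
    let x : MvPowerSeries (Fin 3) k := MvPowerSeries.X 0
    let y : MvPowerSeries (Fin 3) k := MvPowerSeries.X 1
    let u : MvPowerSeries (Fin 3) k := MvPowerSeries.X 2
    let I : Ideal (MvPowerSeries (Fin 3) k) :=
      Ideal.span {y ^ 2 - x ^ 3, u ^ 4 - x ^ 15}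
    u ^ 2 - x ^ 6 * y ∉ I ∧ (u ^ 2 - x ^ 6 * y) ^ 2 ∈ I ∧ ¬ I.IsRadical ∧ ¬ I.IsPrime := by
  intro x y u I
  have h2 : (2 : MvPowerSeries (Fin 3) k) = 0 := by
    have hk : (2 : k) = 0 := by
      have := CharP.cast_eq_zero k 2
      simpa using this
    calc (2 : MvPowerSeries (Fin 3) k) = (MvPowerSeries.C (σ := Fin 3) (R := k)) 2 := (map_ofNat _ 2).symm
      _ = 0 := by rw [hk, map_zero]
  -- non-membership
  have hnot : u ^ 2 - x ^ 6 * y ∉ I := by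
    intro hmem
    rw [Ideal.mem_span_pair] at hmem
    obtain ⟨a, b, hab⟩ := hmem
    have := congrArg (MvPowerSeries.coeff (Finsupp.single (2 : Fin 3) 2)) hab
    rw [map_add] at this
    have ha : MvPowerSeries.coeff (Finsupp.single (2 : Fin 3) 2) (a * (y ^ 2 - x ^ 3)) = 0 := by
      rw [mul_sub, map_sub,
        coeff_mul_Xpow_eq_zero a 1 2 _ (by
          intro h
          have := h 1
          simp at this),
        coeff_mul_Xpow_eq_zero a 0 3 _ (by
          intro h
          have := h 0
          simp at this)]
      ring
    have hb : MvPowerSeries.coeff (Finsupp.single (2 : Fin 3) 2) (b * (u ^ 4 - x ^ 15)) = 0 := by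
      rw [mul_sub, map_sub,
        coeff_mul_Xpow_eq_zero b 2 4 _ (by
          intro h
          have := h 2
          simp at this),
        coeff_mul_Xpow_eq_zero b 0 15 _ (by
          intro h
          have := h 0
          simp at this)]
      ring
    have hrhs : MvPowerSeries.coeff (Finsupp.single (2 : Fin 3) 2) (u ^ 2 - x ^ 6 * y) = 1 := by
      rw [map_sub]
      have h1 : MvPowerSeries.coeff (Finsupp.single (2 : Fin 3) 2) (u ^ 2) = 1 := by
        show MvPowerSeries.coeff _ (MvPowerSeries.X 2 ^ 2) = 1
        rw [MvPowerSeries.coeff_X_pow, if_pos rfl]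
      have h3 : MvPowerSeries.coeff (Finsupp.single (2 : Fin 3) 2) (x ^ 6 * y) = 0 := by
        have hxy : x ^ 6 * y = MvPowerSeries.X (0 : Fin 3) ^ 6 * MvPowerSeries.X 1 ^ 1 := by
          ring
        rw [hxy, X_pow_eq, X_pow_eq, monomial_mul_monomial, MvPowerSeries.coeff_monomial, if_neg]
        intro h
        have := DFunLike.congr_fun h (2 : Fin 3)
        simp at this
      rw [h1, h3]; ring
    rw [ha, hb, hrhs] at this
    simp at this
  -- membership of the square
  have hsq : (u ^ 2 - x ^ 6 * y) ^ 2 ∈ I := by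
    rw [Ideal.mem_span_pair]
    refine ⟨x ^ 12, 1, ?_⟩
    linear_combination (u ^ 2 * x ^ 6 * y - x ^ 15) * h2
  refine ⟨hnot, hsq, ?_, ?_⟩
  · intro hrad
    exact hnot (hrad ⟨2, hsq⟩)
  · intro hp
    exact hnot (hp.mem_of_pow_mem 2 hsq)
end

section
/- The sublattice L of ℤ^3 generated by the vectors (-(p+1), p, 0) and (-p^2(p+1), -p, p^2) is not saturated: the vector w = (-p(p+1), -1, p) does not lie in L, but p·w lies in L. (Here p ≥ 2 is any integer.) -/
/-- The sublattice `L ⊆ ℤ³` generated by `(-(p+1), p, 0)` and `(-p²(p+1), -p, p²)`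
is not saturated: `w = (-p(p+1), -1, p)` is not in `L` but `p • w` is. -/
theorem stmt4 (p : ℤ) (hp : 2 ≤ p) :
    let v₁ : Fin 3 → ℤ := ![-(p + 1), p, 0]
    let v₂ : Fin 3 → ℤ := ![-(p ^ 2 * (p + 1)), -p, p ^ 2]
    let w : Fin 3 → ℤ := ![-(p * (p + 1)), -1, p]
    let L := AddSubgroup.closure ({v₁, v₂} : Set (Fin 3 → ℤ))
    w ∉ L ∧ p • w ∈ L := by
  intro v₁ v₂ w L
  constructor
  · intro hw
    have hdvd : ∀ x ∈ L, p ∣ x 1 := by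
      intro x hx
      induction hx using AddSubgroup.closure_induction with
      | mem y hy =>
        rcases hy with h | h <;> subst h <;> simp [v₁, v₂]
      | zero => simp
      | add x y _ _ hx hy => exact dvd_add hx hy
      | neg x _ hx => exact dvd_neg.mpr hx
    have : (p : ℤ) ∣ -1 := by simpa [w] using hdvd w hw
    have h1 : p ∣ 1 := (dvd_neg).mp this
    have := Int.le_of_dvd one_pos h1
    omega
  · have h : p • w = v₂ := by
      funext i
      fin_cases i <;> simp [w, v₂] <;> ring
    rw [h]
    exact AddSubgroup.subset_closure (by simp)
end

section
/- For every rational polyhedral strictly convex cone σ in ℝ^r (generated by finitely many integer vectors), the semigroup σ̌ ∩ ℤ^r, where σ̌ = {u : ⟨u,v⟩ ≥ 0 for all v ∈ σ} is the dual cone, is a finitely generated monoid (Gordan's lemma), and it generates ℤ^r as a group. -/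
/-- The rational polyhedral cone positively generated by the finite set `S` of integer
vectors in `ℝ^r`. -/

def coneOf (r : ℕ) (S : Finset (Fin r → ℤ)) : Set (Fin r → ℝ) :=
  {v | ∃ c : (Fin r → ℤ) → ℝ, (∀ s, 0 ≤ c s) ∧
    v = ∑ s ∈ S, c s • (fun j => (s j : ℝ))}

theorem mem_coneOf_self (r : ℕ) (S : Finset (Fin r → ℤ)) {s : Fin r → ℤ} (hs : s ∈ S) :
    (fun j => (s j : ℝ)) ∈ coneOf r S := by
  classical
  refine ⟨fun t => if t = s then 1 else 0, fun t => by dsimp only; split <;> norm_num, ?_⟩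
  rw [show (∑ t ∈ S, (if t = s then (1:ℝ) else 0) • (fun j => (t j : ℝ)))
      = ∑ t ∈ S, (if t = s then (fun j => (t j : ℝ)) else 0) from
    Finset.sum_congr rfl (fun t _ => by split <;> simp)]
  rw [Finset.sum_ite_eq' S s (fun t => (fun j => (t j : ℝ)))]
  simp [hs]

theorem cond_iff (r : ℕ) (S : Finset (Fin r → ℤ)) (m : Fin r → ℤ) :
    (∀ v ∈ coneOf r S, 0 ≤ ∑ j, (m j : ℝ) * v j) ↔ ∀ s ∈ S, 0 ≤ ∑ j, m j * s j := by
  constructor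
  · intro h s hs
    have := h _ (mem_coneOf_self r S hs)
    have h2 : ((∑ j, m j * s j : ℤ) : ℝ) = ∑ j, (m j : ℝ) * (s j : ℝ) := by push_cast; rfl
    exact_mod_cast h2 ▸ this
  · rintro h v ⟨c, hc, rfl⟩
    have key : ∑ j, (m j : ℝ) * (∑ s ∈ S, c s • (fun j => (s j : ℝ))) j
        = ∑ s ∈ S, c s * ∑ j, (m j : ℝ) * (s j : ℝ) := by
      simp only [Finset.sum_apply, Pi.smul_apply, smul_eq_mul, Finset.mul_sum]
      rw [Finset.sum_comm]
      exact Finset.sum_congr rfl fun s _ => Finset.sum_congr rfl fun j _ => by ring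
    rw [key]
    refine Finset.sum_nonneg fun s hs => mul_nonneg (hc s) ?_
    have h2 : ((∑ j, m j * s j : ℤ) : ℝ) = ∑ j, (m j : ℝ) * (s j : ℝ) := by push_cast; rfl
    rw [← h2]
    exact_mod_cast h s hs


private theorem natLtWellOrder' : IsWellOrder ℕ (· < ·) := inferInstance

theorem gordan_int (r : ℕ) (S : Finset (Fin r → ℤ)) :
    ∃ G : Finset (Fin r → ℤ), ∀ m, m ∈ AddSubmonoid.closure (G : Set (Fin r → ℤ)) ↔
      ∀ s ∈ S, 0 ≤ ∑ j, m j * s j := by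
  classical
  let F : ((Fin r ⊕ Fin r ⊕ {s : Fin r → ℤ // s ∈ S}) → ℕ) →+ ({s : Fin r → ℤ // s ∈ S} → ℤ) :=
    { toFun := fun x s => (∑ j, (x (Sum.inl j) : ℤ) * s.1 j)
        - (∑ j, (x (Sum.inr (Sum.inl j)) : ℤ) * s.1 j) - (x (Sum.inr (Sum.inr s)) : ℤ)
      map_zero' := by funext s; simp
      map_add' := by
        intro x y; funext s
        simp only [Pi.add_apply, Nat.cast_add, add_mul, Finset.sum_add_distrib]
        ring }
  let π : ((Fin r ⊕ Fin r ⊕ {s : Fin r → ℤ // s ∈ S}) → ℕ) →+ (Fin r → ℤ) :=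
    { toFun := fun x j => (x (Sum.inl j) : ℤ) - (x (Sum.inr (Sum.inl j)) : ℤ)
      map_zero' := by funext j; simp
      map_add' := by intro x y; funext j; simp only [Pi.add_apply, Nat.cast_add]; ring }
  let Nsub : AddSubmonoid ((Fin r ⊕ Fin r ⊕ {s : Fin r → ℤ // s ∈ S}) → ℕ) :=
    { carrier := {x | F x = 0}
      zero_mem' := map_zero F
      add_mem' := fun ha hb => by simp_all [map_add] }
  have hNmem : ∀ x, x ∈ Nsub ↔ F x = 0 := fun x => Iff.rfl
  -- the set of minimal nonzero elements
  let K : Set ((Fin r ⊕ Fin r ⊕ {s : Fin r → ℤ // s ∈ S}) → ℕ) :=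
    {x | x ∈ Nsub ∧ x ≠ 0 ∧ ∀ y ∈ Nsub, y ≠ 0 → y ≤ x → y = x}
  have hKfin : K.Finite := by
    have hpwo : K.IsPWO :=
      (Set.IsPWO.pi (s := fun _ : (Fin r ⊕ Fin r ⊕ {s : Fin r → ℤ // s ∈ S}) => (Set.univ : Set ℕ))
        (fun _ => Set.isPWO_univ_iff.2 inferInstance)).mono
        (fun x _ => Set.mem_univ_pi.2 fun _ => Set.mem_univ _)
    have hanti : IsAntichain (· ≤ ·) K := by
      intro x hx y hy hne hle
      exact hne (hy.2.2 x hx.1 hx.2.1 hle)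
    exact hanti.finite_of_partiallyWellOrderedOn hpwo
  -- every element of N is in the closure of K
  have hNgen : ∀ x ∈ Nsub, x ∈ AddSubmonoid.closure K := by
    have key : ∀ n x, x ∈ Nsub → (∑ i, x i) = n → x ∈ AddSubmonoid.closure K := by
      intro n
      induction n using Nat.strong_induction_on with
      | _ n ih =>
        intro x hx hsum
        by_cases hx0 : x = 0
        · subst hx0; exact zero_mem _
        · have hTfin : {z | z ∈ Nsub ∧ z ≠ 0 ∧ z ≤ x}.Finite :=
            (Set.finite_Icc 0 x).subset (fun z hz => Set.mem_Icc.2 ⟨fun _ => Nat.zero_le _, hz.2.2⟩)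
          obtain ⟨y, hyT, hymin⟩ := (hTfin.toFinset).exists_minimal
            (by rw [Set.Finite.toFinset_nonempty]; exact ⟨x, hx, hx0, le_refl x⟩)
          rw [Set.Finite.mem_toFinset] at hyT
          obtain ⟨hyN, hy0, hyx⟩ := hyT
          have hyK : y ∈ K := by
            refine ⟨hyN, hy0, fun z hzN hz0 hzy => ?_⟩
            by_contra hne
            exact hne (le_antisymm hzy
              (hymin (Set.Finite.mem_toFinset _ |>.2 ⟨hzN, hz0, hzy.trans hyx⟩) hzy))
          have hsubN : x - y ∈ Nsub := by
            rw [hNmem]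
            have h1 : F (x - y) + F y = F x := by
              rw [← map_add, tsub_add_cancel_of_le hyx]
            have h2 : F y = 0 := (hNmem y).1 hyN
            have h3 : F x = 0 := (hNmem x).1 hx
            rw [h2, add_zero] at h1; rw [h1, h3]
          have hsumdec : (∑ i, (x - y) i) + (∑ i, y i) = n := by
            rw [← Finset.sum_add_distrib, ← hsum]
            exact Finset.sum_congr rfl (fun i _ => tsub_add_cancel_of_le (hyx i))
          have hypos : 0 < ∑ i, y i := by
            rcases Nat.eq_zero_or_pos (∑ i, y i) with h | h
            · exfalso; apply hy0; funext i
              exact (Finset.sum_eq_zero_iff.1 h) i (Finset.mem_univ i)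
            · exact h
          have hlt : (∑ i, (x - y) i) < n := by omega
          have hxy := ih _ hlt (x - y) hsubN rfl
          have := add_mem hxy (AddSubmonoid.subset_closure hyK)
          rwa [tsub_add_cancel_of_le hyx] at this
    exact fun x hx => key _ x hx rfl
  -- the generating set
  refine ⟨hKfin.toFinset.image π, fun m => ?_⟩
  have hGcoe : ((hKfin.toFinset.image π : Finset (Fin r → ℤ)) : Set (Fin r → ℤ)) = π '' K := by
    rw [Finset.coe_image, Set.Finite.coe_toFinset]
  rw [hGcoe, ← AddMonoidHom.map_mclosure]
  constructor
  · rintro hm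
    rw [AddSubmonoid.mem_map] at hm
    obtain ⟨x, hxcl, rfl⟩ := hm
    have hxN : x ∈ Nsub := by
      have : AddSubmonoid.closure K ≤ Nsub := AddSubmonoid.closure_le.2 (fun z hz => hz.1)
      exact this hxcl
    intro s hs
    have hFx : F x ⟨s, hs⟩ = 0 := congrFun ((hNmem x).1 hxN) ⟨s, hs⟩
    have : ∑ j, π x j * s j
        = (∑ j, (x (Sum.inl j) : ℤ) * s j) - ∑ j, (x (Sum.inr (Sum.inl j)) : ℤ) * s j := by
      rw [← Finset.sum_sub_distrib]
      exact Finset.sum_congr rfl (fun j _ => by simp [π, sub_mul])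
    rw [this]
    have : (∑ j, (x (Sum.inl j) : ℤ) * s j) - (∑ j, (x (Sum.inr (Sum.inl j)) : ℤ) * s j)
        = (x (Sum.inr (Sum.inr ⟨s, hs⟩)) : ℤ) := by
      have := hFx
      simp only [F, AddMonoidHom.coe_mk, ZeroHom.coe_mk] at this
      linarith
    rw [this]
    positivity
  · intro hm
    rw [AddSubmonoid.mem_map]
    set x : (Fin r ⊕ Fin r ⊕ {s : Fin r → ℤ // s ∈ S}) → ℕ := fun i =>
      match i with
      | Sum.inl j => (m j).toNat
      | Sum.inr (Sum.inl j) => (-(m j)).toNat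
      | Sum.inr (Sum.inr s) => (∑ j, m j * s.1 j).toNat with hxdef
    have hxN : x ∈ Nsub := by
      rw [hNmem]
      funext s
      simp only [F, AddMonoidHom.coe_mk, ZeroHom.coe_mk]
      have h1 : ∀ j, (x (Sum.inl j) : ℤ) * s.1 j - (x (Sum.inr (Sum.inl j)) : ℤ) * s.1 j
          = m j * s.1 j := by
        intro j
        rw [← sub_mul]
        congr 1
        simp only [hxdef]
        omega
      have h2 : (x (Sum.inr (Sum.inr s)) : ℤ) = ∑ j, m j * s.1 j := by
        simp only [hxdef]
        exact Int.toNat_of_nonneg (hm s.1 s.2)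
      rw [← Finset.sum_sub_distrib] at *
      rw [h2]
      rw [Finset.sum_congr rfl (fun j _ => h1 j)]
      ring_nf
      rfl
    refine ⟨x, hNgen x hxN, ?_⟩
    funext j
    simp only [π, AddMonoidHom.coe_mk, ZeroHom.coe_mk, hxdef]
    omega

theorem exists_pos_functional (r : ℕ) (S : Finset (Fin r → ℤ))
    (hsc : ∀ v ∈ coneOf r S, -v ∈ coneOf r S → v = 0) :
    ∃ u : Fin r → ℤ, ∀ s ∈ S, s ≠ 0 → 1 ≤ ∑ j, u j * s j := by
  classical
  set cf : (Fin r → ℤ) → (Fin r → ℝ) := fun s j => (s j : ℝ) with hcf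
  have hcf_inj : Function.Injective cf := by
    intro a b hab
    funext j
    have h := congrFun hab j
    simp only [hcf] at h
    exact_mod_cast h
  set S' : Finset (Fin r → ℤ) := S.filter (fun s => s ≠ 0) with hS'
  set T : Finset (Fin r → ℝ) := S'.image cf with hT
  have h0 : (0 : Fin r → ℝ) ∉ convexHull ℝ (T : Set (Fin r → ℝ)) := by
    intro h0
    rw [Finset.convexHull_eq] at h0
    obtain ⟨w, hw0, hw1, hwc⟩ := h0
    rw [Finset.centerMass_eq_of_sum_1 _ _ hw1] at hwc
    have hex : ∃ y ∈ T, 0 < w y := by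
      by_contra hne
      push_neg at hne
      have : ∑ y ∈ T, w y ≤ 0 := Finset.sum_nonpos (fun y hy => hne y hy)
      rw [hw1] at this; linarith
    obtain ⟨y₀, hy₀T, hy₀pos⟩ := hex
    obtain ⟨s₀, hs₀S', rfl⟩ := Finset.mem_image.1 hy₀T
    have hs₀S : s₀ ∈ S := (Finset.mem_filter.1 hs₀S').1
    have hs₀0 : s₀ ≠ 0 := (Finset.mem_filter.1 hs₀S').2
    have hsum : ∑ s ∈ S', w (cf s) • cf s = 0 := by
      rw [hT, Finset.sum_image (fun a _ b _ hab => hcf_inj hab)] at hwc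
      simpa [id] using hwc
    have hsplit : w (cf s₀) • cf s₀ + ∑ s ∈ S'.erase s₀, w (cf s) • cf s = 0 := by
      rw [← hsum, Finset.add_sum_erase S' (fun s => w (cf s) • cf s) hs₀S']
    have hneg : -(cf s₀) ∈ coneOf r S := by
      refine ⟨fun t => if t ∈ S'.erase s₀ then w (cf t) / w (cf s₀) else 0, ?_, ?_⟩
      · intro t; dsimp only; split
        · rename_i ht
          exact div_nonneg
            (hw0 _ (Finset.mem_image_of_mem cf (Finset.mem_of_mem_erase ht)))
            (le_of_lt hy₀pos)
        · exact le_refl 0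
      · have hterm : ∀ t ∈ S, (if t ∈ S'.erase s₀ then w (cf t) / w (cf s₀) else 0) • cf t
            = if t ∈ S'.erase s₀ then (w (cf t) / w (cf s₀)) • cf t else 0 := by
          intro t _; split <;> simp
        rw [Finset.sum_congr rfl hterm, Finset.sum_ite_mem]
        have hsub : S ∩ S'.erase s₀ = S'.erase s₀ := by
          apply Finset.inter_eq_right.2
          intro t ht
          exact (Finset.mem_filter.1 (Finset.mem_of_mem_erase ht)).1
        rw [hsub]
        have : ∑ t ∈ S'.erase s₀, (w (cf t) / w (cf s₀)) • cf t
            = (w (cf s₀))⁻¹ • ∑ t ∈ S'.erase s₀, w (cf t) • cf t := by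
          rw [Finset.smul_sum]
          exact Finset.sum_congr rfl fun t _ => by rw [div_eq_inv_mul, mul_smul]
        rw [this, show ∑ t ∈ S'.erase s₀, w (cf t) • cf t = -(w (cf s₀) • cf s₀) by
          linear_combination (norm := module) hsplit]
        rw [smul_neg, smul_smul, inv_mul_cancel₀ (ne_of_gt hy₀pos), one_smul]
    have hpos : cf s₀ ∈ coneOf r S := mem_coneOf_self r S hs₀S
    have := hsc _ hpos hneg
    apply hs₀0
    funext j
    have h := congrFun this j
    simp only [hcf, Pi.zero_apply] at h ⊢
    exact_mod_cast h
  obtain ⟨f, ε, hf0, hfC⟩ := geometric_hahn_banach_point_closed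
    (convex_convexHull ℝ _) ((T.finite_toSet.isCompact_convexHull (𝕜 := ℝ)).isClosed) h0
  rw [map_zero] at hf0
  set wj : Fin r → ℝ := fun i => f (fun j => if i = j then (1:ℝ) else 0) with hwj
  have hfx : ∀ x : Fin r → ℝ, f x = ∑ i, x i * wj i := by
    intro x
    conv_lhs => rw [pi_eq_sum_univ x]
    rw [map_sum]
    exact Finset.sum_congr rfl fun i _ => by rw [map_smul, smul_eq_mul]
  have hws : ∀ s ∈ S', ε < ∑ i, (s i : ℝ) * wj i := by
    intro s hs
    have := hfC (cf s) (subset_convexHull ℝ _ (by exact_mod_cast Finset.mem_image_of_mem cf hs))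
    rwa [hfx] at this
  set Bmax : ℝ := ∑ s ∈ S, ∑ j, |(s j : ℝ)| with hBmax
  have hB0 : 0 ≤ Bmax :=
    Finset.sum_nonneg fun s _ => Finset.sum_nonneg fun j _ => abs_nonneg _
  set K : ℕ := ⌈(Bmax + 1) / ε⌉₊ with hKdef
  have hK : Bmax + 1 ≤ (K : ℝ) * ε := by
    have h1 : (Bmax + 1) / ε ≤ (K : ℝ) := Nat.le_ceil _
    calc Bmax + 1 = ((Bmax + 1) / ε) * ε := by field_simp
    _ ≤ (K : ℝ) * ε := mul_le_mul_of_nonneg_right h1 (le_of_lt hf0)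
  refine ⟨fun i => round ((K : ℝ) * wj i), fun s hs hs0 => ?_⟩
  have hsS' : s ∈ S' := Finset.mem_filter.2 ⟨hs, hs0⟩
  have hcast : ((∑ j, round ((K : ℝ) * wj j) * s j : ℤ) : ℝ)
      = ∑ j, (round ((K : ℝ) * wj j) : ℝ) * (s j : ℝ) := by push_cast; rfl
  have hreal : (1 : ℝ) ≤ ∑ j, (round ((K : ℝ) * wj j) : ℝ) * (s j : ℝ) := by
    have hr1 : ∀ j, |(round ((K : ℝ) * wj j) : ℝ) - (K : ℝ) * wj j| ≤ 1/2 := fun j => by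
      simpa [abs_sub_comm] using abs_sub_round ((K : ℝ) * wj j)
    have hBs : ∑ j, |(s j : ℝ)| ≤ Bmax :=
      Finset.single_le_sum (f := fun t : Fin r → ℤ => ∑ j, |(t j : ℝ)|)
        (fun t _ => Finset.sum_nonneg fun j _ => abs_nonneg _) hs
    have hsum1 : ∑ j, (round ((K : ℝ) * wj j) : ℝ) * (s j : ℝ)
        = (∑ j, ((round ((K : ℝ) * wj j) : ℝ) - (K : ℝ) * wj j) * (s j : ℝ))
          + (K : ℝ) * ∑ j, (s j : ℝ) * wj j := by
      rw [Finset.mul_sum, ← Finset.sum_add_distrib]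
      exact Finset.sum_congr rfl fun j _ => by ring
    have hlow : -Bmax ≤ ∑ j, ((round ((K : ℝ) * wj j) : ℝ) - (K : ℝ) * wj j) * (s j : ℝ) := by
      have h1 : ∀ j ∈ Finset.univ, -|(s j : ℝ)|
          ≤ ((round ((K : ℝ) * wj j) : ℝ) - (K : ℝ) * wj j) * (s j : ℝ) := by
        intro j _
        have habs : |((round ((K : ℝ) * wj j) : ℝ) - (K : ℝ) * wj j) * (s j : ℝ)|
            ≤ |(s j : ℝ)| := by
          rw [abs_mul]
          calc |(round ((K : ℝ) * wj j) : ℝ) - (K : ℝ) * wj j| * |(s j : ℝ)|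
              ≤ 1 * |(s j : ℝ)| :=
                mul_le_mul_of_nonneg_right ((hr1 j).trans (by norm_num)) (abs_nonneg _)
          _ = |(s j : ℝ)| := one_mul _
        linarith [neg_abs_le (((round ((K : ℝ) * wj j) : ℝ) - (K : ℝ) * wj j) * (s j : ℝ)),
          abs_le.1 habs]
      calc -Bmax ≤ -∑ j, |(s j : ℝ)| := by linarith
      _ = ∑ j, -|(s j : ℝ)| := by rw [Finset.sum_neg_distrib]
      _ ≤ _ := Finset.sum_le_sum h1
    have hmid : (K : ℝ) * ε ≤ (K : ℝ) * ∑ j, (s j : ℝ) * wj j :=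
      mul_le_mul_of_nonneg_left (le_of_lt (hws s hsS')) (Nat.cast_nonneg K)
    rw [hsum1]
    linarith
  rw [← hcast] at hreal
  exact_mod_cast hreal


/-- Gordan's lemma: for a strictly convex rational polyhedral cone `σ` in `ℝ^r`, the
semigroup `σ̌ ∩ ℤ^r` is a finitely generated monoid, and it generates `ℤ^r` as a group. -/
theorem stmt12 (r : ℕ) (S : Finset (Fin r → ℤ))
    (hsc : ∀ v ∈ coneOf r S, -v ∈ coneOf r S → v = 0) :
    (∃ G : Finset (Fin r → ℤ),
      ∀ m : Fin r → ℤ, m ∈ AddSubmonoid.closure (G : Set (Fin r → ℤ)) ↔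
        ∀ v ∈ coneOf r S, 0 ≤ ∑ j, (m j : ℝ) * v j) ∧
    AddSubgroup.closure
      {m : Fin r → ℤ | ∀ v ∈ coneOf r S, 0 ≤ ∑ j, (m j : ℝ) * v j} = ⊤ := by
  classical
  constructor
  · obtain ⟨G, hG⟩ := gordan_int r S
    exact ⟨G, fun m => (hG m).trans (cond_iff r S m).symm⟩
  · obtain ⟨u, hu⟩ := exists_pos_functional r S hsc
    rw [eq_top_iff]
    intro n _
    have huM : ∀ s ∈ S, 0 ≤ ∑ j, u j * s j := by
      intro s hs
      by_cases h0 : s = 0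
      · subst h0; simp
      · linarith [hu s hs h0]
    set k : ℕ := (∑ s ∈ S, |∑ j, n j * s j|).toNat with hk
    have hkk : ∀ s ∈ S, |∑ j, n j * s j| ≤ (k : ℤ) := by
      intro s hs
      have h1 : |∑ j, n j * s j| ≤ ∑ s ∈ S, |∑ j, n j * s j| :=
        Finset.single_le_sum (f := fun t : Fin r → ℤ => |∑ j, n j * t j|) (fun t _ => abs_nonneg _) hs
      have h2 : (∑ s ∈ S, |∑ j, n j * s j|) ≤ ((∑ s ∈ S, |∑ j, n j * s j|).toNat : ℤ) :=
        Int.self_le_toNat _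
      rw [hk]
      linarith
    have h2 : ∀ s ∈ S, 0 ≤ ∑ j, (n + k • u) j * s j := by
      intro s hs
      have hsum : ∑ j, (n + k • u) j * s j
          = (∑ j, n j * s j) + (k : ℤ) * ∑ j, u j * s j := by
        rw [Finset.mul_sum, ← Finset.sum_add_distrib]
        refine Finset.sum_congr rfl fun j _ => ?_
        simp only [Pi.add_apply, Pi.smul_apply, nsmul_eq_mul, Pi.mul_apply, Pi.natCast_apply]
        ring
      rw [hsum]
      by_cases h0 : s = 0
      · subst h0; simp
      · have h3 := hkk s hs
        have h4 : (k : ℤ) * 1 ≤ (k : ℤ) * ∑ j, u j * s j :=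
          mul_le_mul_of_nonneg_left (hu s hs h0) (by positivity)
        have h5 := neg_abs_le (∑ j, n j * s j)
        linarith
    have hnk : (n + k • u) ∈ {m : Fin r → ℤ | ∀ v ∈ coneOf r S, 0 ≤ ∑ j, (m j : ℝ) * v j} :=
      (cond_iff r S _).2 h2
    have hku : u ∈ {m : Fin r → ℤ | ∀ v ∈ coneOf r S, 0 ≤ ∑ j, (m j : ℝ) * v j} :=
      (cond_iff r S _).2 huM
    have hmem := sub_mem (AddSubgroup.subset_closure hnk)
      (AddSubgroup.nsmul_mem _ (AddSubgroup.subset_closure hku) k)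
    simpa using hmem
end

section
/- Given an additive preorder w on M = ℤ^r and a fan Σ whose support is all of ℝ^r (in the dual space N_ℝ), there is a unique cone σ ∈ Σ such that every element of σ̌ ∩ M is ≽_w 0 and σ^⊥ ∩ M = {m ∈ σ̌ ∩ M : m ≼_w 0 and m ≽_w 0}. -/
/-- A subset of `ℝ^r` is a rational polyhedral cone if it is positively generated by a
finite set of integer vectors. -/
def IsPolyCone (r : ℕ) (σ : Set (Fin r → ℝ)) : Prop :=
  ∃ S : Finset (Fin r → ℤ), σ = coneOf r S

/-- `τ` is a face of the cone `σ`: it is a rational polyhedral cone cut out on `σ` by a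
linear form nonnegative on `σ`. -/
def IsFace (r : ℕ) (τ σ : Set (Fin r → ℝ)) : Prop :=
  IsPolyCone r τ ∧ ∃ u : Fin r → ℝ, (∀ v ∈ σ, 0 ≤ ∑ j, u j * v j) ∧
    τ = {v ∈ σ | ∑ j, u j * v j = 0}

/-- A finite fan in `ℝ^r`: a finite collection of rational polyhedral strictly convex
cones, closed under taking faces, pairwise intersections being common faces. -/
def IsFan (r : ℕ) (F : Finset (Set (Fin r → ℝ))) : Prop :=
  (∀ σ ∈ F, IsPolyCone r σ ∧ ∀ v ∈ σ, -v ∈ σ → v = 0) ∧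
  (∀ σ ∈ F, ∀ τ, IsFace r τ σ → τ ∈ F) ∧
  (∀ σ ∈ F, ∀ τ ∈ F, IsFace r (σ ∩ τ) σ ∧ IsFace r (σ ∩ τ) τ)

/-- An integer vector is primitive if the gcd of its coordinates is `1`. -/
def IsPrimitive (r : ℕ) (v : Fin r → ℤ) : Prop :=
  Finset.univ.gcd (fun j => (v j).natAbs) = 1

/-- The ray (one-dimensional cone) generated by the integer vector `v`. -/
def rayOf (r : ℕ) (v : Fin r → ℤ) : Set (Fin r → ℝ) :=
  {x | ∃ c : ℝ, 0 ≤ c ∧ x = c • (fun j => (v j : ℝ))}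

section MotzkinSec
open Finset

theorem motzkin {K : Type} [Field K] [LinearOrder K] [IsStrictOrderedRing K] :
    ∀ (n : ℕ) (ι : Type) [Fintype ι] (a : ι → Fin n → K) (st : ι → Prop),
    (∃ w : Fin n → K, ∀ i, (0 ≤ ∑ j, a i j * w j) ∧ (st i → 0 < ∑ j, a i j * w j)) ∨
    (∃ lam : ι → K, (∀ i, 0 ≤ lam i) ∧ (∀ j, ∑ i, lam i * a i j = 0) ∧ ∃ i, st i ∧ 0 < lam i) := by
  intro n
  induction n with
  | zero =>
    intro ι _ a st
    by_cases h : ∃ i, st i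
    · obtain ⟨i₀, hi₀⟩ := h
      classical
      refine Or.inr ⟨fun i => if i = i₀ then 1 else 0, ?_, ?_, ⟨i₀, hi₀, by simp⟩⟩
      · intro i; by_cases hi : i = i₀ <;> simp [hi]
      · intro j; exact j.elim0
    · refine Or.inl ⟨0, fun i => ⟨by simp, fun hst => absurd ⟨i, hst⟩ h⟩⟩
  | succ n ih =>
    intro ι _ a st
    classical
    set α : ι → K := fun i => a i (Fin.last n) with hα
    set a' : ι → Fin n → K := fun i j => a i j.castSucc with ha'
    set b : ι ⊕ ι × ι → Fin n → K := fun k =>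
      Sum.rec (fun i => if α i = 0 then a' i else 0)
        (fun pq => if 0 < α pq.1 ∧ α pq.2 < 0 then
            (fun j => α pq.1 * a' pq.2 j + (-α pq.2) * a' pq.1 j) else 0) k with hb
    set st' : ι ⊕ ι × ι → Prop := fun k =>
      Sum.rec (fun i => st i ∧ α i = 0)
        (fun pq => (st pq.1 ∨ st pq.2) ∧ (0 < α pq.1 ∧ α pq.2 < 0)) k with hst'
    rcases ih (ι ⊕ ι × ι) b st' with ⟨w', hw'⟩ | ⟨c, hc0, hcsum, k, hkst, hkpos⟩
    · -- solution case
      set d : ι → K := fun i => ∑ j, a' i j * w' j with hd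
      have hdot : ∀ (i : ι) (t : K),
          (∑ j, a i j * (Fin.snoc w' t : Fin (n+1) → K) j) = d i + α i * t := by
        intro i t
        rw [Fin.sum_univ_castSucc]
        simp [hd, ha', hα]
      have hZ : ∀ i, α i = 0 → (0 ≤ d i ∧ (st i → 0 < d i)) := by
        intro i hi
        have h1 := (hw' (Sum.inl i)).1
        refine ⟨?_, fun hsti => ?_⟩
        · simpa [hb, hd, hi] using h1
        · have h2 := (hw' (Sum.inl i)).2 (show st' (Sum.inl i) from ⟨hsti, hi⟩)
          simpa [hb, hd, hi] using h2
      have hPN : ∀ p q, 0 < α p → α q < 0 →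
          (0 ≤ α p * d q - α q * d p ∧ ((st p ∨ st q) → 0 < α p * d q - α q * d p)) := by
        intro p q hp hq
        have h1 := (hw' (Sum.inr (p, q))).1
        have h2 := (hw' (Sum.inr (p, q))).2
        have hcond : 0 < α p ∧ α q < 0 := ⟨hp, hq⟩
        simp only [hb, hst', if_pos hcond] at h1 h2
        have hsum : (∑ j, (α p * a' q j + (-α q) * a' p j) * w' j)
            = α p * d q - α q * d p := by
          have hterm : ∀ j, (α p * a' q j + (-α q) * a' p j) * w' j
              = α p * (a' q j * w' j) - α q * (a' p j * w' j) := fun j => by ring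
          rw [Finset.sum_congr rfl (fun j _ => hterm j), Finset.sum_sub_distrib,
            ← Finset.mul_sum, ← Finset.mul_sum]
        rw [hsum] at h1 h2
        exact ⟨h1, fun hs => h2 ⟨hs, hcond⟩⟩
      set g : ι → K := fun i => -d i / α i with hg
      have hgp : ∀ i, 0 < α i → ∀ t : K, (g i ≤ t ↔ 0 ≤ d i + α i * t) ∧
          (g i < t ↔ 0 < d i + α i * t) := by
        intro i hi t
        constructor
        · rw [hg, div_le_iff₀ hi]; constructor <;> intro h <;> nlinarith
        · rw [hg, div_lt_iff₀ hi]; constructor <;> intro h <;> nlinarith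
      have hgn : ∀ i, α i < 0 → ∀ t : K, (t ≤ g i ↔ 0 ≤ d i + α i * t) ∧
          (t < g i ↔ 0 < d i + α i * t) := by
        intro i hi t
        constructor
        · rw [hg, le_div_iff_of_neg hi]; constructor <;> intro h <;> nlinarith
        · rw [hg, lt_div_iff_of_neg hi]; constructor <;> intro h <;> nlinarith
      have hglege : ∀ p q, 0 < α p → α q < 0 → (g p ≤ g q ∧ ((st p ∨ st q) → g p < g q)) := by
        intro p q hp hq
        have h := hPN p q hp hq
        have hne : α p ≠ 0 := ne_of_gt hp
        have hne' : α q ≠ 0 := ne_of_lt hq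
        have key : g q - g p = (α p * d q - α q * d p) / (α p * (-α q)) := by
          rw [hg]; field_simp; ring
        have hden : 0 < α p * (-α q) := mul_pos hp (by linarith)
        constructor
        · have : 0 ≤ g q - g p := by rw [key]; exact div_nonneg h.1 (le_of_lt hden)
          linarith
        · intro hs
          have : 0 < g q - g p := by rw [key]; exact div_pos (h.2 hs) hden
          linarith
      set P : Finset ι := univ.filter (fun i => 0 < α i) with hP
      set N : Finset ι := univ.filter (fun i => α i < 0) with hN
      have hex : ∃ t : K, (∀ p ∈ P, g p ≤ t ∧ (st p → g p < t)) ∧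
          (∀ q ∈ N, t ≤ g q ∧ (st q → t < g q)) := by
        by_cases hPne : P.Nonempty <;> by_cases hNne : N.Nonempty
        · obtain ⟨p₀, hp₀, hA⟩ := Finset.exists_mem_eq_sup' hPne g
          obtain ⟨q₀, hq₀, hB⟩ := Finset.exists_mem_eq_inf' hNne g
          have hp₀' : 0 < α p₀ := (Finset.mem_filter.mp hp₀).2
          have hq₀' : α q₀ < 0 := (Finset.mem_filter.mp hq₀).2
          have hAB : P.sup' hPne g ≤ N.inf' hNne g := by
            rw [hA, hB]; exact (hglege p₀ q₀ hp₀' hq₀').1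
          refine ⟨(P.sup' hPne g + N.inf' hNne g) / 2, ?_, ?_⟩
          · intro p hp
            have h1 : g p ≤ P.sup' hPne g := Finset.le_sup' g hp
            constructor
            · linarith
            · intro hstp
              have h2 : g p < N.inf' hNne g := by
                rw [hB]; exact (hglege p q₀ (Finset.mem_filter.mp hp).2 hq₀').2 (Or.inl hstp)
              linarith
          · intro q hq
            have h1 : N.inf' hNne g ≤ g q := Finset.inf'_le g hq
            constructor
            · linarith
            · intro hstq
              have h2 : P.sup' hPne g < g q := by
                rw [hA]; exact (hglege p₀ q hp₀' (Finset.mem_filter.mp hq).2).2 (Or.inr hstq)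
              linarith
        · refine ⟨P.sup' hPne g + 1, ?_, ?_⟩
          · intro p hp
            have h1 : g p ≤ P.sup' hPne g := Finset.le_sup' g hp
            exact ⟨by linarith, fun _ => by linarith⟩
          · intro q hq; exact absurd ⟨q, hq⟩ hNne
        · refine ⟨N.inf' hNne g - 1, ?_, ?_⟩
          · intro p hp; exact absurd ⟨p, hp⟩ hPne
          · intro q hq
            have h1 : N.inf' hNne g ≤ g q := Finset.inf'_le g hq
            exact ⟨by linarith, fun _ => by linarith⟩
        · exact ⟨0, fun p hp => absurd ⟨p, hp⟩ hPne, fun q hq => absurd ⟨q, hq⟩ hNne⟩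
      obtain ⟨t, hlow, hup⟩ := hex
      refine Or.inl ⟨Fin.snoc w' t, fun i => ?_⟩
      rw [hdot i t]
      rcases lt_trichotomy (α i) 0 with hneg | hzero | hpos
      · have hiN : i ∈ N := Finset.mem_filter.mpr ⟨Finset.mem_univ _, hneg⟩
        have := hup i hiN
        exact ⟨((hgn i hneg t).1).mp this.1, fun hsti => ((hgn i hneg t).2).mp (this.2 hsti)⟩
      · have := hZ i hzero
        rw [hzero]
        constructor
        · simpa using this.1
        · intro hsti; simpa using this.2 hsti
      · have hiP : i ∈ P := Finset.mem_filter.mpr ⟨Finset.mem_univ _, hpos⟩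
        have := hlow i hiP
        exact ⟨((hgp i hpos t).1).mp this.1, fun hsti => ((hgp i hpos t).2).mp (this.2 hsti)⟩
    · -- certificate case
      set c2 : ι → ι → K := fun p q => if 0 < α p ∧ α q < 0 then c (Sum.inr (p, q)) else 0 with hc2
      have hc2nn : ∀ p q, 0 ≤ c2 p q := by
        intro p q; rw [hc2]; dsimp only
        by_cases h : 0 < α p ∧ α q < 0
        · rw [if_pos h]; exact hc0 _
        · rw [if_neg h]
      set lam : ι → K := fun i => (if α i = 0 then c (Sum.inl i) else 0)
          + (∑ q, c2 i q * (-α q)) + (∑ p, c2 p i * α p) with hlam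
      have hterm2 : ∀ i q, 0 ≤ c2 i q * (-α q) := by
        intro i q; rw [hc2]; dsimp only
        by_cases h : 0 < α i ∧ α q < 0
        · rw [if_pos h]; exact mul_nonneg (hc0 _) (by linarith [h.2])
        · rw [if_neg h]; simp
      have hterm3 : ∀ p i, 0 ≤ c2 p i * α p := by
        intro p i; rw [hc2]; dsimp only
        by_cases h : 0 < α p ∧ α i < 0
        · rw [if_pos h]; exact mul_nonneg (hc0 _) (le_of_lt h.1)
        · rw [if_neg h]; simp
      have hlamnn : ∀ i, 0 ≤ lam i := by
        intro i
        have h1 : (0:K) ≤ if α i = 0 then c (Sum.inl i) else 0 := by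
          by_cases h : α i = 0
          · rw [if_pos h]; exact hc0 _
          · rw [if_neg h]
        have h2 : (0:K) ≤ ∑ q, c2 i q * (-α q) := Finset.sum_nonneg fun q _ => hterm2 i q
        have h3 : (0:K) ≤ ∑ p, c2 p i * α p := Finset.sum_nonneg fun p _ => hterm3 p i
        rw [hlam]; dsimp only; linarith
      refine Or.inr ⟨lam, hlamnn, ?_, ?_⟩
      · intro j
        induction j using Fin.lastCases with
        | last =>
          show (∑ i, lam i * α i) = 0
          have expand : ∀ i, lam i * α i = (if α i = 0 then c (Sum.inl i) else 0) * α i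
              + (∑ q, c2 i q * (-α q) * α i) + (∑ p, c2 p i * α p * α i) := by
            intro i; rw [hlam]; dsimp only; rw [add_mul, add_mul, Finset.sum_mul, Finset.sum_mul]
          rw [Finset.sum_congr rfl (fun i _ => expand i)]
          rw [Finset.sum_add_distrib, Finset.sum_add_distrib]
          have e1 : (∑ i, (if α i = 0 then c (Sum.inl i) else 0) * α i) = 0 := by
            apply Finset.sum_eq_zero; intro i _
            by_cases h : α i = 0
            · rw [if_pos h, h, mul_zero]
            · rw [if_neg h, zero_mul]
          have e2 : (∑ i, ∑ q, c2 i q * (-α q) * α i) + (∑ i, ∑ p, c2 p i * α p * α i) = 0 := by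
            have swap : (∑ i, ∑ p, c2 p i * α p * α i) = ∑ p, ∑ i, c2 p i * α p * α i :=
              Finset.sum_comm
            rw [swap, ← Finset.sum_add_distrib]
            apply Finset.sum_eq_zero; intro i _
            rw [← Finset.sum_add_distrib]
            apply Finset.sum_eq_zero; intro q _
            ring
          rw [add_assoc, e1, zero_add]; exact e2
        | cast j' =>
          show (∑ i, lam i * a i j'.castSucc) = 0
          have key := hcsum j'
          rw [Fintype.sum_sum_type] at key
          have expand : ∀ i, lam i * a i j'.castSucc
              = (if α i = 0 then c (Sum.inl i) else 0) * a' i j'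
              + (∑ q, c2 i q * (-α q) * a' i j') + (∑ p, c2 p i * α p * a' i j') := by
            intro i; rw [hlam]; dsimp only
            rw [add_mul, add_mul, Finset.sum_mul, Finset.sum_mul]
          rw [Finset.sum_congr rfl (fun i _ => expand i)]
          rw [Finset.sum_add_distrib, Finset.sum_add_distrib]
          have e1 : (∑ i, (if α i = 0 then c (Sum.inl i) else 0) * a' i j')
              = ∑ i, c (Sum.inl i) * b (Sum.inl i) j' := by
            apply Finset.sum_congr rfl; intro i _
            rw [hb]; dsimp only
            by_cases h : α i = 0
            · rw [if_pos h, if_pos h]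
            · rw [if_neg h, if_neg h]; simp
          have e2 : (∑ i, ∑ q, c2 i q * (-α q) * a' i j') + (∑ i, ∑ p, c2 p i * α p * a' i j')
              = ∑ (pq : ι × ι), c (Sum.inr pq) * b (Sum.inr pq) j' := by
            have swap : (∑ i, ∑ p, c2 p i * α p * a' i j') = ∑ p, ∑ i, c2 p i * α p * a' i j' :=
              Finset.sum_comm
            rw [Fintype.sum_prod_type, swap, ← Finset.sum_add_distrib]
            apply Finset.sum_congr rfl; intro p _
            rw [← Finset.sum_add_distrib]
            apply Finset.sum_congr rfl; intro q _
            rw [hb, hc2]; dsimp only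
            by_cases h : 0 < α p ∧ α q < 0
            · rw [if_pos h, if_pos h]; ring
            · rw [if_neg h, if_neg h]; simp
          rw [add_assoc, e1, e2]
          linarith [key]
      · rcases k with i | ⟨p, q⟩
        · obtain ⟨hsti, hai⟩ := hkst
          refine ⟨i, hsti, ?_⟩
          have h1 : (if α i = 0 then c (Sum.inl i) else 0) = c (Sum.inl i) := if_pos hai
          have h2 : (0:K) ≤ ∑ q, c2 i q * (-α q) := Finset.sum_nonneg fun q _ => hterm2 i q
          have h3 : (0:K) ≤ ∑ p, c2 p i * α p := Finset.sum_nonneg fun p _ => hterm3 p i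
          rw [hlam]; dsimp only; rw [h1]
          have := hkpos
          linarith
        · obtain ⟨hst, hcond⟩ := hkst
          have hc2pq : c2 p q = c (Sum.inr (p, q)) := if_pos hcond
          rcases hst with hstp | hstq
          · refine ⟨p, hstp, ?_⟩
            have h2 : c2 p q * (-α q) ≤ ∑ q', c2 p q' * (-α q') :=
              Finset.single_le_sum (fun q' _ => hterm2 p q') (Finset.mem_univ q)
            have hpos : 0 < c2 p q * (-α q) := by
              rw [hc2pq]; exact mul_pos hkpos (by linarith [hcond.2])
            have h1 : (0:K) ≤ if α p = 0 then c (Sum.inl p) else 0 := by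
              by_cases h : α p = 0
              · rw [if_pos h]; exact hc0 _
              · rw [if_neg h]
            have h3 : (0:K) ≤ ∑ p', c2 p' p * α p' := Finset.sum_nonneg fun p' _ => hterm3 p' p
            rw [hlam]; dsimp only; linarith
          · refine ⟨q, hstq, ?_⟩
            have h3 : c2 p q * α p ≤ ∑ p', c2 p' q * α p' :=
              Finset.single_le_sum (fun p' _ => hterm3 p' q) (Finset.mem_univ p)
            have hpos : 0 < c2 p q * α p := by
              rw [hc2pq]; exact mul_pos hkpos hcond.1
            have h1 : (0:K) ≤ if α q = 0 then c (Sum.inl q) else 0 := by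
              by_cases h : α q = 0
              · rw [if_pos h]; exact hc0 _
              · rw [if_neg h]
            have h2 : (0:K) ≤ ∑ q', c2 q q' * (-α q') := Finset.sum_nonneg fun q' _ => hterm2 q q'
            rw [hlam]; dsimp only; linarith

end MotzkinSec

namespace Stmt17

variable {r : ℕ}

/-- dot product -/
def dotR (u v : Fin r → ℝ) : ℝ := ∑ j, u j * v j

lemma dotR_comm (u v : Fin r → ℝ) : dotR u v = dotR v u := by
  unfold dotR; exact Finset.sum_congr rfl fun j _ => mul_comm _ _

lemma dotR_smul_right (u : Fin r → ℝ) (c : ℝ) (v : Fin r → ℝ) :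
    dotR u (c • v) = c * dotR u v := by
  unfold dotR
  rw [Finset.mul_sum]
  exact Finset.sum_congr rfl fun j _ => by simp [mul_comm, mul_left_comm]

lemma dotR_add_right (u v w : Fin r → ℝ) : dotR u (v + w) = dotR u v + dotR u w := by
  unfold dotR
  rw [← Finset.sum_add_distrib]
  exact Finset.sum_congr rfl fun j _ => by simp [mul_add]

lemma dotR_neg_left (u v : Fin r → ℝ) : dotR (-u) v = -dotR u v := by
  unfold dotR
  rw [← Finset.sum_neg_distrib]
  exact Finset.sum_congr rfl fun j _ => by simp

lemma dotR_sum_right {ι : Type*} (u : Fin r → ℝ) (s : Finset ι) (f : ι → Fin r → ℝ) :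
    dotR u (∑ i ∈ s, f i) = ∑ i ∈ s, dotR u (f i) := by
  classical
  induction s using Finset.induction with
  | empty => simp [dotR]
  | insert _ _ hx ih =>
    rw [Finset.sum_insert hx, Finset.sum_insert hx, dotR_add_right, ih]

lemma dotR_zero_right (u : Fin r → ℝ) : dotR u 0 = 0 := by simp [dotR]

/-- cone generated by a finite set of real vectors -/
def rcone (V : Finset (Fin r → ℝ)) : Set (Fin r → ℝ) :=
  {x | ∃ c : (Fin r → ℝ) → ℝ, (∀ v, 0 ≤ c v) ∧ x = ∑ v ∈ V, c v • v}

lemma zero_mem_rcone (V : Finset (Fin r → ℝ)) : (0 : Fin r → ℝ) ∈ rcone V :=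
  ⟨0, fun _ => le_refl 0, by simp⟩

lemma mem_rcone_of_mem {V : Finset (Fin r → ℝ)} {v : Fin r → ℝ} (hv : v ∈ V) :
    v ∈ rcone V := by
  classical
  refine ⟨fun w => if w = v then 1 else 0, fun w => by positivity, ?_⟩
  rw [Finset.sum_congr rfl (fun w _ => by rw [ite_smul, one_smul, zero_smul])]
  rw [Finset.sum_ite_eq' V v (fun w => w)]
  simp [hv]

lemma add_mem_rcone {V : Finset (Fin r → ℝ)} {x y : Fin r → ℝ}
    (hx : x ∈ rcone V) (hy : y ∈ rcone V) : x + y ∈ rcone V := by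
  obtain ⟨c, hc, rfl⟩ := hx
  obtain ⟨c', hc', rfl⟩ := hy
  exact ⟨c + c', fun v => add_nonneg (hc v) (hc' v), by
    rw [← Finset.sum_add_distrib]
    exact Finset.sum_congr rfl fun v _ => by simp [add_smul]⟩

lemma smul_mem_rcone {V : Finset (Fin r → ℝ)} {x : Fin r → ℝ} {a : ℝ}
    (ha : 0 ≤ a) (hx : x ∈ rcone V) : a • x ∈ rcone V := by
  obtain ⟨c, hc, rfl⟩ := hx
  exact ⟨fun v => a * c v, fun v => mul_nonneg ha (hc v), by
    rw [Finset.smul_sum]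
    exact Finset.sum_congr rfl fun v _ => by rw [smul_smul]⟩

lemma sum_mem_rcone {V : Finset (Fin r → ℝ)} {ι : Type*} {s : Finset ι} {f : ι → Fin r → ℝ}
    (hf : ∀ i ∈ s, f i ∈ rcone V) : (∑ i ∈ s, f i) ∈ rcone V :=
  Finset.sum_induction f (· ∈ rcone V) (fun _ _ ha hb => add_mem_rcone ha hb)
    (zero_mem_rcone V) hf

lemma rcone_mono {V W : Finset (Fin r → ℝ)} (h : V ⊆ W) : rcone V ⊆ rcone W := by
  rintro x ⟨c, hc, rfl⟩
  classical
  refine ⟨fun v => if v ∈ V then c v else 0, fun v => by by_cases hv : v ∈ V <;> simp [hv, hc v], ?_⟩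
  have e1 : (∑ v ∈ W, (if v ∈ V then c v else 0) • v) = ∑ v ∈ V, (if v ∈ V then c v else 0) • v :=
    (Finset.sum_subset h (fun v _ hv => by rw [if_neg hv, zero_smul])).symm
  have e2 : (∑ v ∈ V, (if v ∈ V then c v else 0) • v) = ∑ v ∈ V, c v • v :=
    Finset.sum_congr rfl fun v hv => by rw [if_pos hv]
  rw [e1, e2]

lemma rcone_subset_of_closed {V : Finset (Fin r → ℝ)} {C : Set (Fin r → ℝ)}
    (hzero : (0 : Fin r → ℝ) ∈ C)
    (hadd : ∀ x y, x ∈ C → y ∈ C → x + y ∈ C)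
    (hsmul : ∀ (a : ℝ) x, 0 ≤ a → x ∈ C → a • x ∈ C)
    (hgen : ∀ v ∈ V, v ∈ C) : rcone V ⊆ C := by
  rintro x ⟨c, hc, rfl⟩
  exact Finset.sum_induction _ (· ∈ C) (fun a b ha hb => hadd a b ha hb) hzero
    (fun v hv => hsmul (c v) v (hc v) (hgen v hv))

lemma dotR_nonneg_of_mem_rcone {V : Finset (Fin r → ℝ)} {u x : Fin r → ℝ}
    (hu : ∀ v ∈ V, 0 ≤ dotR u v) (hx : x ∈ rcone V) : 0 ≤ dotR u x := by
  obtain ⟨c, hc, rfl⟩ := hx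
  rw [dotR_sum_right]
  exact Finset.sum_nonneg fun v hv => by
    rw [dotR_smul_right]; exact mul_nonneg (hc v) (hu v hv)

/-- face of a cone cut by a functional nonnegative on the generators -/
lemma rcone_face (V : Finset (Fin r → ℝ)) (u : Fin r → ℝ) (hu : ∀ v ∈ V, 0 ≤ dotR u v) :
    {x | x ∈ rcone V ∧ dotR u x = 0}
      = rcone (V.filter (fun v => dotR u v = 0)) := by
  classical
  apply Set.eq_of_subset_of_subset
  · rintro x ⟨⟨c, hc, rfl⟩, hdot⟩
    rw [dotR_sum_right] at hdot
    have hterm : ∀ v ∈ V, 0 ≤ dotR u (c v • v) := fun v hv => by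
      rw [dotR_smul_right]; exact mul_nonneg (hc v) (hu v hv)
    have hzero : ∀ v ∈ V, dotR u (c v • v) = 0 :=
      (Finset.sum_eq_zero_iff_of_nonneg hterm).mp hdot
    refine ⟨c, hc, ?_⟩
    refine (Finset.sum_subset (Finset.filter_subset _ _) fun v hv hvn => ?_).symm
    have h1 : ¬ dotR u v = 0 := by
      intro h; exact hvn (Finset.mem_filter.mpr ⟨hv, h⟩)
    have h2 := hzero v hv
    rw [dotR_smul_right] at h2
    rcases mul_eq_zero.mp h2 with h | h
    · rw [h, zero_smul]
    · exact absurd h h1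
  · intro x hx
    have hsub : V.filter (fun v => dotR u v = 0) ⊆ V := Finset.filter_subset _ _
    refine ⟨rcone_mono hsub hx, ?_⟩
    obtain ⟨c, hc, rfl⟩ := hx
    rw [dotR_sum_right]
    apply Finset.sum_eq_zero
    intro v hv
    rw [dotR_smul_right, (Finset.mem_filter.mp hv).2, mul_zero]

/-- rational vectors -/
def RatVec (v : Fin r → ℝ) : Prop := ∃ q : Fin r → ℚ, v = fun j => (q j : ℝ)

lemma RatVec.add {v w : Fin r → ℝ} (hv : RatVec v) (hw : RatVec w) : RatVec (v + w) := by
  obtain ⟨q, rfl⟩ := hv; obtain ⟨q', rfl⟩ := hw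
  exact ⟨q + q', by funext j; push_cast; simp⟩

lemma RatVec.ratsmul {v : Fin r → ℝ} (a : ℚ) (hv : RatVec v) : RatVec ((a : ℝ) • v) := by
  obtain ⟨q, rfl⟩ := hv
  exact ⟨a • q, by funext j; push_cast; simp⟩

lemma RatVec.dot_rat {u v : Fin r → ℝ} (hu : RatVec u) (hv : RatVec v) :
    ∃ q : ℚ, dotR u v = (q : ℝ) := by
  obtain ⟨a, rfl⟩ := hu; obtain ⟨b, rfl⟩ := hv
  exact ⟨∑ j, a j * b j, by unfold dotR; push_cast; ring⟩

lemma mem_rcone_image_iff {ι : Type*} (s : Finset ι) (g : ι → Fin r → ℝ) (x : Fin r → ℝ) :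
    x ∈ rcone (s.image g) ↔ ∃ c : ι → ℝ, (∀ i, 0 ≤ c i) ∧ x = ∑ i ∈ s, c i • g i := by
  classical
  constructor
  · rintro ⟨C, hC, rfl⟩
    refine ⟨fun i => C (g i) / (s.filter (fun i' => g i' = g i)).card, fun i => ?_, ?_⟩
    · exact div_nonneg (hC _) (Nat.cast_nonneg _)
    · rw [← Finset.sum_fiberwise_of_maps_to (fun i hi => Finset.mem_image_of_mem g hi)
        (fun i => (C (g i) / ((s.filter (fun i' => g i' = g i)).card : ℝ)) • g i)]
      apply Finset.sum_congr rfl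
      intro v hv
      have hinner : ∀ i ∈ s.filter (fun i' => g i' = v),
          (C (g i) / ((s.filter (fun i' => g i' = g i)).card : ℝ)) • g i
            = (C v / ((s.filter (fun i' => g i' = v)).card : ℝ)) • v := by
        intro i hi
        have hgi : g i = v := (Finset.mem_filter.mp hi).2
        rw [hgi]
      rw [Finset.sum_congr rfl hinner, Finset.sum_const]
      obtain ⟨i₀, hi₀⟩ : (s.filter (fun i' => g i' = v)).Nonempty := by
        obtain ⟨i, hi, rfl⟩ := Finset.mem_image.mp hv
        exact ⟨i, Finset.mem_filter.mpr ⟨hi, rfl⟩⟩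
      have hcard : ((s.filter (fun i' => g i' = v)).card : ℝ) ≠ 0 := by
        have := Finset.card_ne_zero_of_mem hi₀
        exact_mod_cast this
      rw [← Nat.cast_smul_eq_nsmul ℝ, smul_smul]
      congr 1
      field_simp
  · rintro ⟨c, hc, rfl⟩
    refine ⟨fun v => ∑ i ∈ s.filter (fun i' => g i' = v), c i,
      fun v => Finset.sum_nonneg fun i _ => hc i, ?_⟩
    rw [← Finset.sum_fiberwise_of_maps_to (fun i hi => Finset.mem_image_of_mem g hi)
      (fun i => c i • g i)]
    apply Finset.sum_congr rfl
    intro v _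
    rw [Finset.sum_smul]
    apply Finset.sum_congr rfl
    intro i hi
    rw [(Finset.mem_filter.mp hi).2]

/-- cast of integer vectors -/
def castV (m : Fin r → ℤ) : Fin r → ℝ := fun j => (m j : ℝ)

lemma castV_ratVec (m : Fin r → ℤ) : RatVec (castV m) :=
  ⟨fun j => (m j : ℚ), by funext j; simp [castV]⟩

lemma coneOf_eq_rcone (S : Finset (Fin r → ℤ)) :
    coneOf r S = rcone (S.image castV) := by
  classical
  ext x
  show (∃ c : (Fin r → ℤ) → ℝ, (∀ s, 0 ≤ c s) ∧ x = ∑ s ∈ S, c s • (fun j => (s j : ℝ)))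
    ↔ _
  rw [mem_rcone_image_iff S castV x]
  rfl

/-- Minkowski: an H-cone (finitely many rational halfspaces) is finitely generated,
with rational generators. -/
theorem minkowski : ∀ (L : List (Fin r → ℝ)), (∀ t ∈ L, RatVec t) →
    ∃ V : Finset (Fin r → ℝ), (∀ v ∈ V, RatVec v) ∧
      rcone V = {x | ∀ t ∈ L, 0 ≤ dotR t x} := by
  classical
  intro L
  induction L with
  | nil =>
    intro _
    set V₀ : Finset (Fin r → ℝ) :=
      (Finset.univ.image (fun j : Fin r => Pi.single j (1:ℝ)))
      ∪ (Finset.univ.image (fun j : Fin r => -Pi.single j (1:ℝ))) with hV₀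
    refine ⟨V₀, ?_, ?_⟩
    · intro v hv
      rw [hV₀, Finset.mem_union] at hv
      rcases hv with hv | hv <;> obtain ⟨j, _, rfl⟩ := Finset.mem_image.mp hv
      · exact ⟨Pi.single j (1:ℚ), by
          funext k
          by_cases hk : k = j <;> simp [Pi.single_apply, hk]⟩
      · exact ⟨-Pi.single j (1:ℚ), by
          funext k
          by_cases hk : k = j <;> simp [Pi.single_apply, hk]⟩
    · apply Set.eq_of_subset_of_subset
      · intro x _; simp
      · intro x _
        have hx : x = (∑ j, (max (x j) 0) • (Pi.single j (1:ℝ) : Fin r → ℝ))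
            + (∑ j, (max (-(x j)) 0) • (-(Pi.single j (1:ℝ) : Fin r → ℝ))) := by
          funext k
          have hs1 : (∑ j, (max (x j) 0) • (Pi.single j (1:ℝ) : Fin r → ℝ)) k
              = max (x k) 0 := by
            rw [Finset.sum_apply]
            rw [Fintype.sum_eq_single k (fun j hj => ?_)]
            · simp
            · have : (Pi.single j (1:ℝ) : Fin r → ℝ) k = 0 :=
                Pi.single_eq_of_ne (Ne.symm hj) 1
              simp [this]
          have hs2 : (∑ j, (max (-(x j)) 0) • (-(Pi.single j (1:ℝ) : Fin r → ℝ))) k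
              = -(max (-(x k)) 0) := by
            rw [Finset.sum_apply]
            rw [Fintype.sum_eq_single k (fun j hj => ?_)]
            · simp
            · have : (Pi.single j (1:ℝ) : Fin r → ℝ) k = 0 :=
                Pi.single_eq_of_ne (Ne.symm hj) 1
              simp [this]
          rw [Pi.add_apply, hs1, hs2]
          rcases le_total (x k) 0 with h | h
          · rw [max_eq_right h, max_eq_left (by linarith)]; ring
          · rw [max_eq_left h, max_eq_right (by linarith)]; ring
        rw [hx]
        apply add_mem_rcone
        · apply sum_mem_rcone
          intro j _
          apply smul_mem_rcone (le_max_right _ _)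
          apply mem_rcone_of_mem
          rw [hV₀, Finset.mem_union]
          exact Or.inl (Finset.mem_image_of_mem _ (Finset.mem_univ j))
        · apply sum_mem_rcone
          intro j _
          apply smul_mem_rcone (le_max_right _ _)
          apply mem_rcone_of_mem
          rw [hV₀, Finset.mem_union]
          exact Or.inr (Finset.mem_image_of_mem _ (Finset.mem_univ j))
  | cons t L' ih =>
    intro hrat
    obtain ⟨V, hVrat, hV⟩ := ih (fun t' ht' => hrat t' (List.mem_cons_of_mem t ht'))
    have htrat : RatVec t := hrat t List.mem_cons_self
    set P : Finset (Fin r → ℝ) := V.filter (fun v => 0 < dotR t v) with hPdef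
    set Nn : Finset (Fin r → ℝ) := V.filter (fun v => dotR t v < 0) with hNdef
    set Z0 : Finset (Fin r → ℝ) := V.filter (fun v => dotR t v = 0) with hZdef
    set U : Finset (Fin r → ℝ) :=
      (P ×ˢ Nn).image (fun pq => dotR t pq.1 • pq.2 + (-(dotR t pq.2)) • pq.1) with hUdef
    set V' : Finset (Fin r → ℝ) := V.filter (fun v => 0 ≤ dotR t v) ∪ U with hV'def
    have hPV' : P ⊆ V' := by
      intro v hv
      rw [hV'def]
      apply Finset.mem_union_left
      exact Finset.mem_filter.mpr ⟨Finset.mem_of_mem_filter v hv,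
        le_of_lt (Finset.mem_filter.mp hv).2⟩
    have hZV' : Z0 ⊆ V' := by
      intro v hv
      rw [hV'def]
      apply Finset.mem_union_left
      exact Finset.mem_filter.mpr ⟨Finset.mem_of_mem_filter v hv,
        le_of_eq (Finset.mem_filter.mp hv).2.symm⟩
    refine ⟨V', ?_, ?_⟩
    · intro v hv
      rw [hV'def, Finset.mem_union] at hv
      rcases hv with hv | hv
      · exact hVrat v (Finset.mem_of_mem_filter v hv)
      · obtain ⟨⟨p, q⟩, hpq, rfl⟩ := Finset.mem_image.mp hv
        have hpmem := Finset.mem_of_mem_filter p (Finset.mem_product.mp hpq).1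
        have hqmem := Finset.mem_of_mem_filter q (Finset.mem_product.mp hpq).2
        obtain ⟨a, ha⟩ := RatVec.dot_rat htrat (hVrat p hpmem)
        obtain ⟨b, hb⟩ := RatVec.dot_rat htrat (hVrat q hqmem)
        have h1 : RatVec ((a : ℝ) • q) := RatVec.ratsmul a (hVrat q hqmem)
        have h2 : RatVec (((-b : ℚ) : ℝ) • p) := RatVec.ratsmul (-b) (hVrat p hpmem)
        have h3 := RatVec.add h1 h2
        rw [ha, hb]
        simpa using h3
    · have htarget : {x : Fin r → ℝ | ∀ t' ∈ t :: L', 0 ≤ dotR t' x}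
          = {x | 0 ≤ dotR t x} ∩ rcone V := by
        rw [hV]
        ext x
        simp only [Set.mem_setOf_eq, Set.mem_inter_iff, List.mem_cons]
        constructor
        · intro h; exact ⟨h t (Or.inl rfl), fun t' ht' => h t' (Or.inr ht')⟩
        · rintro ⟨h1, h2⟩ t' ht'
          rcases ht' with rfl | ht'
          · exact h1
          · exact h2 t' ht'
      rw [htarget]
      apply Set.eq_of_subset_of_subset
      · apply rcone_subset_of_closed
        · exact ⟨show (0:ℝ) ≤ dotR t 0 by rw [dotR_zero_right], zero_mem_rcone V⟩
        · rintro x y ⟨hx1, hx2⟩ ⟨hy1, hy2⟩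
          have hx1' : (0:ℝ) ≤ dotR t x := hx1
          have hy1' : (0:ℝ) ≤ dotR t y := hy1
          exact ⟨show (0:ℝ) ≤ dotR t (x + y) by rw [dotR_add_right]; linarith,
            add_mem_rcone hx2 hy2⟩
        · rintro a x ha ⟨hx1, hx2⟩
          have hx1' : (0:ℝ) ≤ dotR t x := hx1
          exact ⟨show (0:ℝ) ≤ dotR t (a • x) by
            rw [dotR_smul_right]; exact mul_nonneg ha hx1', smul_mem_rcone ha hx2⟩
        · intro v hv
          rw [hV'def, Finset.mem_union] at hv
          rcases hv with hv | hv
          · exact ⟨(Finset.mem_filter.mp hv).2,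
              mem_rcone_of_mem (Finset.mem_of_mem_filter v hv)⟩
          · obtain ⟨⟨p, q⟩, hpq, rfl⟩ := Finset.mem_image.mp hv
            obtain ⟨hp, hq⟩ := Finset.mem_product.mp hpq
            have hp2 := (Finset.mem_filter.mp hp).2
            have hq2 := (Finset.mem_filter.mp hq).2
            have hpmem := Finset.mem_of_mem_filter p hp
            have hqmem := Finset.mem_of_mem_filter q hq
            constructor
            · show (0:ℝ) ≤ dotR t _
              rw [dotR_add_right, dotR_smul_right, dotR_smul_right]
              have : dotR t p * dotR t q + -dotR t q * dotR t p = 0 := by ring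
              linarith [this]
            · exact add_mem_rcone (smul_mem_rcone (le_of_lt hp2) (mem_rcone_of_mem hqmem))
                (smul_mem_rcone (by linarith) (mem_rcone_of_mem hpmem))
      · rintro x ⟨hxt, c, hc, rfl⟩
        set x : Fin r → ℝ := ∑ v ∈ V, c v • v with hxdef
        have split3 : ∀ {M : Type} [AddCommMonoid M] (f : (Fin r → ℝ) → M),
            (∑ v ∈ V, f v) = (∑ v ∈ P, f v) + ((∑ v ∈ Z0, f v) + (∑ v ∈ Nn, f v)) := by
          intro M _ f
          have h1 : (V.filter (fun v => ¬ 0 < dotR t v)).filter (fun v => dotR t v = 0)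
              = Z0 := by
            rw [Finset.filter_filter, hZdef]
            ext v
            simp only [Finset.mem_filter, not_lt]
            constructor
            · rintro ⟨hv, _, h⟩; exact ⟨hv, h⟩
            · rintro ⟨hv, h⟩; exact ⟨hv, le_of_eq h, h⟩
          have h2 : (V.filter (fun v => ¬ 0 < dotR t v)).filter (fun v => ¬ dotR t v = 0)
              = Nn := by
            rw [Finset.filter_filter, hNdef]
            ext v
            simp only [Finset.mem_filter, not_lt]
            constructor
            · rintro ⟨hv, h1', h2'⟩; exact ⟨hv, lt_of_le_of_ne h1' h2'⟩
            · rintro ⟨hv, h⟩; exact ⟨hv, le_of_lt h, ne_of_lt h⟩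
          rw [← Finset.sum_filter_add_sum_filter_not V (fun v => 0 < dotR t v) f,
            ← Finset.sum_filter_add_sum_filter_not
              (V.filter (fun v => ¬ 0 < dotR t v)) (fun v => dotR t v = 0) f, h1, h2]
        set A : ℝ := ∑ v ∈ P, c v * dotR t v with hAdef
        set B : ℝ := ∑ v ∈ Nn, c v * (-(dotR t v)) with hBdef
        have hA0 : 0 ≤ A := Finset.sum_nonneg fun v hv =>
          mul_nonneg (hc v) (le_of_lt (Finset.mem_filter.mp hv).2)
        have hB0 : 0 ≤ B := Finset.sum_nonneg fun v hv =>
          mul_nonneg (hc v) (by linarith [(Finset.mem_filter.mp hv).2])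
        have hdotx : dotR t x = A - B := by
          rw [hxdef, dotR_sum_right,
            Finset.sum_congr rfl (fun v (_ : v ∈ V) => dotR_smul_right t (c v) v),
            split3 (fun v => c v * dotR t v)]
          have hZ : (∑ v ∈ Z0, c v * dotR t v) = 0 :=
            Finset.sum_eq_zero fun v hv => by
              rw [(Finset.mem_filter.mp hv).2, mul_zero]
          have hN : (∑ v ∈ Nn, c v * dotR t v) = -B := by
            rw [hBdef, ← Finset.sum_neg_distrib]
            exact Finset.sum_congr rfl fun v _ => by ring
          rw [hZ, hN, hAdef]
          ring
        have hxt' : 0 ≤ A - B := by rw [← hdotx]; exact hxt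
        have hxsplit : x = (∑ v ∈ P, c v • v) + ((∑ v ∈ Z0, c v • v) + (∑ v ∈ Nn, c v • v)) := by
          rw [hxdef]; exact split3 (fun v => c v • v)
        by_cases hBz : B = 0
        · have hczero : ∀ v ∈ Nn, c v = 0 := by
            intro v hv
            have hterms : ∀ w ∈ Nn, 0 ≤ c w * (-(dotR t w)) := fun w hw =>
              mul_nonneg (hc w) (by linarith [(Finset.mem_filter.mp hw).2])
            have := (Finset.sum_eq_zero_iff_of_nonneg hterms).mp hBz v hv
            have hne : -(dotR t v) ≠ 0 := by
              have := (Finset.mem_filter.mp hv).2; intro h; linarith [neg_eq_zero.mp h]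
            rcases mul_eq_zero.mp this with h | h
            · exact h
            · exact absurd h hne
          have hNzero : (∑ v ∈ Nn, c v • v) = 0 :=
            Finset.sum_eq_zero fun v hv => by rw [hczero v hv, zero_smul]
          rw [hxsplit, hNzero, add_zero]
          apply add_mem_rcone
          · exact sum_mem_rcone fun v hv =>
              smul_mem_rcone (hc v) (mem_rcone_of_mem (hPV' hv))
          · exact sum_mem_rcone fun v hv =>
              smul_mem_rcone (hc v) (mem_rcone_of_mem (hZV' hv))
        · have hBpos : 0 < B := lt_of_le_of_ne hB0 (Ne.symm hBz)
          have hApos : 0 < A := by linarith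
          have hAne : A ≠ 0 := ne_of_gt hApos
          have hT : (∑ pq ∈ P ×ˢ Nn, ((c pq.1 * c pq.2) / A)
                • (dotR t pq.1 • pq.2 + (-(dotR t pq.2)) • pq.1))
              = (∑ q ∈ Nn, c q • q) + ∑ p ∈ P, (c p * (B / A)) • p := by
            rw [Finset.sum_product]
            have hper : ∀ p ∈ P, (∑ q ∈ Nn, ((c p * c q) / A)
                  • (dotR t p • q + (-(dotR t q)) • p))
                = (∑ q ∈ Nn, ((c p * dotR t p) * (c q / A)) • q) + (c p * (B/A)) • p := by
              intro p _
              rw [Finset.sum_congr rfl (fun q (_ : q ∈ Nn) => by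
                rw [smul_add, smul_smul, smul_smul]),
                Finset.sum_add_distrib]
              congr 1
              · apply Finset.sum_congr rfl; intro q _; congr 1; ring
              · rw [← Finset.sum_smul]
                congr 1
                have : (∑ q ∈ Nn, (c p * c q) / A * (-(dotR t q)))
                    = (c p / A) * ∑ q ∈ Nn, c q * (-(dotR t q)) := by
                  rw [Finset.mul_sum]
                  apply Finset.sum_congr rfl; intro q _; ring
                rw [this, ← hBdef]
                ring
            rw [Finset.sum_congr rfl hper, Finset.sum_add_distrib]
            congr 1
            have hswap : (∑ p ∈ P, ∑ q ∈ Nn, ((c p * dotR t p) * (c q / A)) • q)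
                = ∑ q ∈ Nn, ∑ p ∈ P, ((c p * dotR t p) * (c q / A)) • q :=
              Finset.sum_comm
            rw [hswap]
            apply Finset.sum_congr rfl
            intro q _
            rw [← Finset.sum_smul, ← Finset.sum_mul, ← hAdef]
            congr 1
            field_simp
          have hkey : x = (∑ v ∈ P, (c v * (1 - B / A)) • v)
              + ((∑ v ∈ Z0, c v • v) + ∑ pq ∈ P ×ˢ Nn, ((c pq.1 * c pq.2) / A)
                • (dotR t pq.1 • pq.2 + (-(dotR t pq.2)) • pq.1)) := by
            rw [hT, hxsplit]
            have hmerge : (∑ v ∈ P, (c v * (1 - B / A)) • v)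
                + ((∑ v ∈ Z0, c v • v) + ((∑ q ∈ Nn, c q • q) + ∑ p ∈ P, (c p * (B / A)) • p))
                = ((∑ v ∈ P, (c v * (1 - B / A)) • v) + ∑ p ∈ P, (c p * (B / A)) • p)
                + ((∑ v ∈ Z0, c v • v) + (∑ q ∈ Nn, c q • q)) := by
              abel
            rw [hmerge]
            have hPsum : (∑ v ∈ P, (c v * (1 - B / A)) • v) + (∑ p ∈ P, (c p * (B / A)) • p)
                = ∑ v ∈ P, c v • v := by
              rw [← Finset.sum_add_distrib]
              apply Finset.sum_congr rfl
              intro v _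
              rw [← add_smul]
              congr 1
              field_simp
              ring
            rw [hPsum]
          rw [hkey]
          apply add_mem_rcone
          · exact sum_mem_rcone fun v hv => smul_mem_rcone
              (mul_nonneg (hc v) (by
                have : B / A ≤ 1 := by
                  rw [div_le_one hApos]; linarith
                linarith))
              (mem_rcone_of_mem (hPV' hv))
          apply add_mem_rcone
          · exact sum_mem_rcone fun v hv =>
              smul_mem_rcone (hc v) (mem_rcone_of_mem (hZV' hv))
          · refine sum_mem_rcone fun pq hpq => smul_mem_rcone
              (div_nonneg (mul_nonneg (hc _) (hc _)) (le_of_lt hApos))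
              (mem_rcone_of_mem ?_)
            rw [hV'def]
            apply Finset.mem_union_right
            exact Finset.mem_image_of_mem _ hpq

/-- Farkas separation over ℝ. -/
lemma farkas_sep (W : Finset (Fin r → ℝ)) (x : Fin r → ℝ) (hx : x ∉ rcone W) :
    ∃ y : Fin r → ℝ, (∀ w ∈ W, 0 ≤ dotR w y) ∧ dotR x y < 0 := by
  classical
  rcases motzkin (K := ℝ) r ({w // w ∈ W} ⊕ Unit)
      (fun k => Sum.rec (fun w => (w : Fin r → ℝ)) (fun _ => -x) k)
      (fun k => Sum.rec (fun _ => False) (fun _ => True) k) with ⟨y, hy⟩ | ⟨lam, hlam0, hlamsum, k, hkst, hkpos⟩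
  · refine ⟨y, fun w hw => (hy (Sum.inl ⟨w, hw⟩)).1, ?_⟩
    have h := (hy (Sum.inr ())).2 trivial
    have : (∑ j, (-x) j * y j) = -dotR x y := dotR_neg_left x y
    rw [this] at h
    linarith
  · exfalso
    rcases k with w | u
    · exact hkst
    · set l₀ : ℝ := lam (Sum.inr ()) with hl₀
      have hl₀pos : 0 < l₀ := hkpos
      set C : (Fin r → ℝ) → ℝ := fun v => if hv : v ∈ W then lam (Sum.inl ⟨v, hv⟩) / l₀ else 0
        with hC
      apply hx
      refine ⟨C, fun v => ?_, ?_⟩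
      · rw [hC]; dsimp only
        by_cases hv : v ∈ W
        · rw [dif_pos hv]; exact div_nonneg (hlam0 _) (le_of_lt hl₀pos)
        · rw [dif_neg hv]
      · funext j
        have key := hlamsum j
        rw [Fintype.sum_sum_type] at key
        have hunit : (∑ u : Unit, lam (Sum.inr u) * (-x) j) = l₀ * (-x j) := by
          simp [hl₀]
        have hsub : (∑ w : {w // w ∈ W}, lam (Sum.inl w) * (w : Fin r → ℝ) j)
            = ∑ v ∈ W, (C v * l₀) * v j := by
          rw [← Finset.sum_coe_sort W (fun v => (C v * l₀) * v j)]
          apply Finset.sum_congr rfl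
          intro w _
          congr 1
          rw [hC]; dsimp only
          rw [dif_pos w.2, div_mul_cancel₀ _ (ne_of_gt hl₀pos)]
        rw [hunit, hsub] at key
        have hx1 : (∑ v ∈ W, C v • v) j = ∑ v ∈ W, C v * v j := by
          rw [Finset.sum_apply]
          exact Finset.sum_congr rfl fun v _ => rfl
        rw [hx1]
        have hexp : (∑ v ∈ W, (C v * l₀) * v j) = l₀ * ∑ v ∈ W, C v * v j := by
          rw [Finset.mul_sum]
          exact Finset.sum_congr rfl fun v _ => by ring
        rw [hexp] at key
        have : l₀ * x j = l₀ * ∑ v ∈ W, C v * v j := by linarith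
        exact mul_left_cancel₀ (ne_of_gt hl₀pos) this

/-- Rational double description of a rational cone. -/
theorem rcone_dual (T : Finset (Fin r → ℝ)) (hT : ∀ t ∈ T, RatVec t) :
    ∃ U : Finset (Fin r → ℝ), (∀ u ∈ U, RatVec u) ∧
      (∀ u ∈ U, ∀ v ∈ rcone T, 0 ≤ dotR u v) ∧
      rcone T = {x | ∀ u ∈ U, 0 ≤ dotR u x} := by
  obtain ⟨U, hUrat, hU⟩ := minkowski T.toList (fun t ht => hT t (Finset.mem_toList.mp ht))
  have hUdualgen : ∀ u ∈ U, ∀ t ∈ T, 0 ≤ dotR t u := by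
    intro u hu t ht
    have : u ∈ rcone U := mem_rcone_of_mem hu
    rw [hU] at this
    exact this t (Finset.mem_toList.mpr ht)
  have hUdual : ∀ u ∈ U, ∀ v ∈ rcone T, 0 ≤ dotR u v := by
    intro u hu v hv
    exact dotR_nonneg_of_mem_rcone (fun t ht => by
      rw [dotR_comm]; exact hUdualgen u hu t ht) hv
  refine ⟨U, hUrat, hUdual, ?_⟩
  apply Set.eq_of_subset_of_subset
  · intro v hv u hu
    exact hUdual u hu v hv
  · intro x hx
    by_contra hxmem
    obtain ⟨y, hy1, hy2⟩ := farkas_sep T x hxmem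
    have hymem : y ∈ rcone U := by
      rw [hU]
      intro t ht
      exact hy1 t (Finset.mem_toList.mp ht)
    have : 0 ≤ dotR x y :=
      dotR_nonneg_of_mem_rcone (fun u hu => by rw [dotR_comm]; exact hx u hu) hymem
    linarith

/-- clearing denominators of a rational number -/
lemma rat_clear (q : ℚ) (k : ℕ) (hdvd : q.den ∣ k) :
    ((q.num * ((k / q.den : ℕ) : ℤ) : ℤ) : ℚ) = (k : ℚ) * q := by
  have hden : ((q.den : ℚ)) ≠ 0 := by
    exact_mod_cast q.den_nz
  have hnum : (q.num : ℚ) = q * q.den := by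
    have h := Rat.num_div_den q
    rw [div_eq_iff hden] at h
    exact h
  have hdiv : (((k / q.den : ℕ)) : ℚ) = (k : ℚ) / (q.den : ℚ) := by
    rw [Nat.cast_div hdvd hden]
  rw [Int.cast_mul, Int.cast_natCast, hdiv, hnum]
  field_simp

/-- scaling a rational vector to an integer vector -/
lemma ratVec_scale {v : Fin r → ℝ} (hv : RatVec v) :
    ∃ (m : Fin r → ℤ) (d : ℕ), 0 < d ∧ castV m = (d : ℝ) • v := by
  obtain ⟨q, rfl⟩ := hv
  set d : ℕ := ∏ j, (q j).den with hd
  have hdpos : 0 < d := Finset.prod_pos fun j _ => (q j).pos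
  refine ⟨fun j => (q j).num * ((d / (q j).den : ℕ) : ℤ), d, hdpos, ?_⟩
  funext j
  have hQ : (((q j).num * ((d / (q j).den : ℕ) : ℤ) : ℤ) : ℚ) = (d : ℚ) * q j :=
    rat_clear (q j) d (Finset.dvd_prod_of_mem _ (Finset.mem_univ j))
  show (((q j).num * ((d / (q j).den : ℕ) : ℤ) : ℤ) : ℝ) = (d : ℝ) * ((q j : ℚ) : ℝ)
  have := congrArg (fun a : ℚ => (a : ℝ)) hQ
  push_cast at this ⊢
  linarith [this]

/-- pairing a certificate with a dot product -/
lemma cert_dot (u : Fin r → ℝ) {ι κ : Type} [Fintype ι] [Fintype κ]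
    (aa : ι → Fin r → ℤ) (bb : κ → Fin r → ℤ) (lam : ι → ℤ) (mu : κ → ℤ)
    (hid : ∀ j, (∑ i, lam i * aa i j) + (∑ k, mu k * bb k j) = 0) :
    (∑ i, (lam i : ℝ) * dotR u (castV (aa i)))
      + (∑ k, (mu k : ℝ) * dotR u (castV (bb k))) = 0 := by
  have e1 : ∀ {ν : Type} [Fintype ν], ∀ (cc : ν → ℤ) (vv : ν → Fin r → ℤ),
      (∑ i : ν, (cc i : ℝ) * dotR u (castV (vv i)))
        = ∑ j, ∑ i : ν, u j * ((cc i : ℝ) * ((vv i j : ℤ) : ℝ)) := by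
    intro ν _ cc vv
    have hterm : ∀ i : ν, (cc i : ℝ) * dotR u (castV (vv i))
        = ∑ j, u j * ((cc i : ℝ) * ((vv i j : ℤ) : ℝ)) := by
      intro i
      unfold dotR castV
      rw [Finset.mul_sum]
      exact Finset.sum_congr rfl fun j _ => by ring
    rw [Finset.sum_congr rfl (fun i _ => hterm i)]
    exact Finset.sum_comm
  rw [e1 lam aa, e1 mu bb, ← Finset.sum_add_distrib]
  apply Finset.sum_eq_zero
  intro j _
  have hcomb : (∑ i, u j * ((lam i : ℝ) * ((aa i j : ℤ) : ℝ)))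
      + (∑ k, u j * ((mu k : ℝ) * ((bb k j : ℤ) : ℝ)))
      = u j * ((∑ i, (lam i : ℝ) * ((aa i j : ℤ) : ℝ))
        + (∑ k, (mu k : ℝ) * ((bb k j : ℤ) : ℝ))) := by
    rw [mul_add, Finset.mul_sum, Finset.mul_sum]
  rw [hcomb]
  have hz : (∑ i, (lam i : ℝ) * ((aa i j : ℤ) : ℝ))
      + (∑ k, (mu k : ℝ) * ((bb k j : ℤ) : ℝ)) = 0 := by
    have h : (((∑ i, lam i * aa i j) + (∑ k, mu k * bb k j) : ℤ) : ℝ) = 0 := by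
      rw [hid j]; simp
    push_cast at h
    exact h
  rw [hz, mul_zero]

/-- a fan is closed under pairwise intersections -/
lemma fan_inter {F : Finset (Set (Fin r → ℝ))} (hF : IsFan r F) :
    ∀ σ ∈ F, ∀ τ ∈ F, σ ∩ τ ∈ F := fun σ hσ τ hτ =>
  hF.2.1 σ hσ _ (hF.2.2 σ hσ τ hτ).1

/-- minimal cone of a fan containing a given point -/
lemma exists_min_cone {F : Finset (Set (Fin r → ℝ))} (hF : IsFan r F) (x : Fin r → ℝ)
    (hx : ∃ σ ∈ F, x ∈ σ) :
    ∃ σ₀ ∈ F, x ∈ σ₀ ∧ ∀ τ ∈ F, x ∈ τ → σ₀ ⊆ τ := by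
  classical
  have key : ∀ G : Finset (Set (Fin r → ℝ)), G.Nonempty → (∀ σ ∈ G, σ ∈ F ∧ x ∈ σ) →
      ∃ σ₀, σ₀ ∈ F ∧ x ∈ σ₀ ∧ ∀ τ ∈ G, σ₀ ⊆ τ := by
    intro G hG
    induction hG using Finset.Nonempty.cons_induction with
    | singleton a =>
      intro h
      obtain ⟨ha, hxa⟩ := h a (Finset.mem_singleton_self a)
      exact ⟨a, ha, hxa, fun τ hτ => by
        rw [Finset.mem_singleton.mp hτ]⟩
    | cons a s ha hs ih =>
      intro h
      obtain ⟨σ₀, hσ₀F, hxσ₀, hσ₀sub⟩ := ih (fun σ hσ => h σ (Finset.mem_cons_of_mem hσ))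
      obtain ⟨haF, hxa⟩ := h a (Finset.mem_cons_self a s)
      refine ⟨a ∩ σ₀, fan_inter hF a haF σ₀ hσ₀F, ⟨hxa, hxσ₀⟩, ?_⟩
      intro τ hτ
      rcases Finset.mem_cons.mp hτ with rfl | hτ
      · exact Set.inter_subset_left
      · exact subset_trans Set.inter_subset_right (hσ₀sub τ hτ)
  obtain ⟨σ, hσF, hxσ⟩ := hx
  have hGne : (F.filter (fun σ => x ∈ σ)).Nonempty :=
    ⟨σ, Finset.mem_filter.mpr ⟨hσF, hxσ⟩⟩
  obtain ⟨σ₀, h1, h2, h3⟩ := key _ hGne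
    (fun σ hσ => ⟨Finset.mem_of_mem_filter σ hσ, (Finset.mem_filter.mp hσ).2⟩)
  exact ⟨σ₀, h1, h2, fun τ hτ hxτ => h3 τ (Finset.mem_filter.mpr ⟨hτ, hxτ⟩)⟩

/-- the zero set on a cone of an integer functional nonnegative on it is a face,
hence belongs to the fan -/
lemma face_mem {F : Finset (Set (Fin r → ℝ))} (hF : IsFan r F) {σ : Set (Fin r → ℝ)}
    (hσ : σ ∈ F) (m : Fin r → ℤ) (hm : ∀ v ∈ σ, 0 ≤ dotR (castV m) v) :
    {v ∈ σ | dotR (castV m) v = 0} ∈ F := by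
  classical
  apply hF.2.1 σ hσ
  obtain ⟨S, hS⟩ := (hF.1 σ hσ).1
  constructor
  · refine ⟨S.filter (fun s => dotR (castV m) (castV s) = 0), ?_⟩
    have h1 : {v ∈ σ | dotR (castV m) v = 0}
        = {x | x ∈ rcone (S.image castV) ∧ dotR (castV m) x = 0} := by
      rw [hS, coneOf_eq_rcone]
    rw [h1, rcone_face _ _ (fun v hv => by
      apply hm
      rw [hS, coneOf_eq_rcone]
      exact mem_rcone_of_mem hv), coneOf_eq_rcone]
    congr 1
    rw [Finset.filter_image]
  · exact ⟨castV m, hm, rfl⟩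

lemma dotR_smul_left (c : ℝ) (u v : Fin r → ℝ) : dotR (c • u) v = c * dotR u v := by
  unfold dotR
  rw [Finset.mul_sum]
  exact Finset.sum_congr rfl fun j _ => by simp [mul_assoc]

/-- scaling a finite family of rationals to integers -/
lemma int_scale {ι : Type} [Fintype ι] (f : ι → ℚ) :
    ∃ (d : ℕ) (g : ι → ℤ), 0 < d ∧ ∀ i, (g i : ℚ) = (d : ℚ) * f i := by
  classical
  refine ⟨∏ i, (f i).den, fun i => (f i).num * (((∏ i, (f i).den) / (f i).den : ℕ) : ℤ),
    Finset.prod_pos fun i _ => (f i).pos, fun i => ?_⟩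
  exact rat_clear (f i) _ (Finset.dvd_prod_of_mem _ (Finset.mem_univ i))

/-- Either a finite system of integral strict/equality sign conditions has a rational
solution, or there is an integral certificate of infeasibility. -/
lemma rat_system {ι : Type} [Fintype ι] (vv : ι → Fin r → ℤ) (SP NP : ι → Prop) :
    (∃ lam mu : ι → ℤ, (∀ i, 0 ≤ lam i) ∧ (∃ i, SP i ∧ 0 < lam i) ∧
      (∀ i, ¬ SP i → lam i = 0) ∧ (∀ i, ¬ NP i → mu i = 0) ∧
      (∀ j, (∑ i, lam i * vv i j) + (∑ i, mu i * vv i j) = 0)) ∨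
    (∃ y : Fin r → ℚ, ∀ i, (SP i → 0 < ∑ j, (vv i j : ℚ) * y j)
      ∧ (NP i → ∑ j, (vv i j : ℚ) * y j = 0)) := by
  classical
  set a : ι ⊕ (ι ⊕ ι) → Fin r → ℚ :=
    fun k => Sum.rec (fun i => if SP i then (fun j => (vv i j : ℚ)) else 0)
      (fun k' => Sum.rec (fun i => if NP i then (fun j => (vv i j : ℚ)) else 0)
        (fun i => if NP i then (fun j => -(vv i j : ℚ)) else 0) k') k with ha
  have ha1 : ∀ i j, a (Sum.inl i) j = if SP i then (vv i j : ℚ) else 0 := by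
    intro i j; rw [ha]; dsimp only
    by_cases h : SP i
    · rw [if_pos h, if_pos h]
    · rw [if_neg h, if_neg h]; rfl
  have ha2 : ∀ i j, a (Sum.inr (Sum.inl i)) j = if NP i then (vv i j : ℚ) else 0 := by
    intro i j; rw [ha]; dsimp only
    by_cases h : NP i
    · rw [if_pos h, if_pos h]
    · rw [if_neg h, if_neg h]; rfl
  have ha3 : ∀ i j, a (Sum.inr (Sum.inr i)) j = if NP i then -(vv i j : ℚ) else 0 := by
    intro i j; rw [ha]; dsimp only
    by_cases h : NP i
    · rw [if_pos h, if_pos h]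
    · rw [if_neg h, if_neg h]; rfl
  rcases motzkin (K := ℚ) r (ι ⊕ (ι ⊕ ι)) a
      (fun k => Sum.rec (fun i => SP i) (fun _ => False) k)
    with ⟨y, hy⟩ | ⟨c, hc0, hcsum, k, hkst, hkpos⟩
  · right
    refine ⟨y, fun i => ⟨fun hsp => ?_, fun hnp => ?_⟩⟩
    · have h := (hy (Sum.inl i)).2 hsp
      have he : (∑ j, a (Sum.inl i) j * y j) = ∑ j, (vv i j : ℚ) * y j :=
        Finset.sum_congr rfl fun j _ => by rw [ha1 i j, if_pos hsp]
      rw [he] at h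
      exact h
    · have h1 := (hy (Sum.inr (Sum.inl i))).1
      have h2 := (hy (Sum.inr (Sum.inr i))).1
      have he1 : (∑ j, a (Sum.inr (Sum.inl i)) j * y j) = ∑ j, (vv i j : ℚ) * y j :=
        Finset.sum_congr rfl fun j _ => by rw [ha2 i j, if_pos hnp]
      have he2 : (∑ j, a (Sum.inr (Sum.inr i)) j * y j) = -∑ j, (vv i j : ℚ) * y j := by
        rw [← Finset.sum_neg_distrib]
        exact Finset.sum_congr rfl fun j _ => by rw [ha3 i j, if_pos hnp]; ring
      rw [he1] at h1
      rw [he2] at h2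
      linarith
  · left
    set lQ : ι → ℚ := fun i => if SP i then c (Sum.inl i) else 0 with hlQ
    set mQ : ι → ℚ := fun i =>
      if NP i then c (Sum.inr (Sum.inl i)) - c (Sum.inr (Sum.inr i)) else 0 with hmQ
    have hlQ0 : ∀ i, 0 ≤ lQ i := by
      intro i; rw [hlQ]; dsimp only
      by_cases h : SP i
      · rw [if_pos h]; exact hc0 _
      · rw [if_neg h]
    have hQid : ∀ j, (∑ i, lQ i * (vv i j : ℚ)) + (∑ i, mQ i * (vv i j : ℚ)) = 0 := by
      intro j
      have key := hcsum j
      rw [Fintype.sum_sum_type, Fintype.sum_sum_type] at key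
      have e1 : (∑ i, c (Sum.inl i) * a (Sum.inl i) j) = ∑ i, lQ i * (vv i j : ℚ) := by
        apply Finset.sum_congr rfl
        intro i _
        rw [ha1 i j, hlQ]; dsimp only
        by_cases h : SP i
        · rw [if_pos h, if_pos h]
        · rw [if_neg h, if_neg h]; ring
      have e2 : (∑ i, c (Sum.inr (Sum.inl i)) * a (Sum.inr (Sum.inl i)) j)
          + (∑ i, c (Sum.inr (Sum.inr i)) * a (Sum.inr (Sum.inr i)) j)
          = ∑ i, mQ i * (vv i j : ℚ) := by
        rw [← Finset.sum_add_distrib]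
        apply Finset.sum_congr rfl
        intro i _
        rw [ha2 i j, ha3 i j, hmQ]; dsimp only
        by_cases h : NP i
        · rw [if_pos h, if_pos h, if_pos h]; ring
        · rw [if_neg h, if_neg h, if_neg h]; ring
      rw [e1, e2] at key
      exact key
    obtain ⟨d, g, hdpos, hg⟩ := int_scale (Sum.elim lQ mQ)
    set lam : ι → ℤ := fun i => g (Sum.inl i) with hlam
    set mu : ι → ℤ := fun i => g (Sum.inr i) with hmu
    have hlamcast : ∀ i, (lam i : ℚ) = (d : ℚ) * lQ i := fun i => hg (Sum.inl i)
    have hmucast : ∀ i, (mu i : ℚ) = (d : ℚ) * mQ i := fun i => hg (Sum.inr i)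
    have hdQ : (0:ℚ) < (d:ℚ) := by exact_mod_cast hdpos
    refine ⟨lam, mu, ?_, ?_, ?_, ?_, ?_⟩
    · intro i
      have : (0:ℚ) ≤ (lam i : ℚ) := by
        rw [hlamcast i]; exact mul_nonneg (le_of_lt hdQ) (hlQ0 i)
      exact_mod_cast this
    · rcases k with i | k'
      · refine ⟨i, hkst, ?_⟩
        have h1 : lQ i = c (Sum.inl i) := by rw [hlQ]; dsimp only; rw [if_pos hkst]
        have : (0:ℚ) < (lam i : ℚ) := by
          rw [hlamcast i, h1]; exact mul_pos hdQ hkpos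
        exact_mod_cast this
      · exact absurd hkst (by rcases k' with _ | _ <;> exact not_false)
    · intro i hsp
      have : (lam i : ℚ) = 0 := by
        rw [hlamcast i, hlQ]; dsimp only; rw [if_neg hsp, mul_zero]
      exact_mod_cast this
    · intro i hnp
      have : (mu i : ℚ) = 0 := by
        rw [hmucast i, hmQ]; dsimp only; rw [if_neg hnp, mul_zero]
      exact_mod_cast this
    · intro j
      have hQ : ((∑ i, lam i * vv i j) + (∑ i, mu i * vv i j) : ℚ) = 0 := by
        push_cast
        have e1 : (∑ i, (lam i : ℚ) * (vv i j : ℚ)) = (d:ℚ) * ∑ i, lQ i * (vv i j : ℚ) := by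
          rw [Finset.mul_sum]
          exact Finset.sum_congr rfl fun i _ => by rw [hlamcast i]; ring
        have e2 : (∑ i, (mu i : ℚ) * (vv i j : ℚ)) = (d:ℚ) * ∑ i, mQ i * (vv i j : ℚ) := by
          rw [Finset.mul_sum]
          exact Finset.sum_congr rfl fun i _ => by rw [hmucast i]; ring
        rw [e1, e2, ← mul_add, hQid j, mul_zero]
      exact_mod_cast hQ

end Stmt17

open Stmt17

/-- Every additive preorder `R` on `ℤ^r` dominates a unique cone `σ` of any finite fan
`F` with support `ℝ^r`: every element of `σ̌ ∩ ℤ^r` is `≽ 0`, and `σ^⊥ ∩ ℤ^r` is exactly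
the set of elements of `σ̌ ∩ ℤ^r` that are both `≼ 0` and `≽ 0`. -/
theorem stmt17 (r : ℕ) (F : Finset (Set (Fin r → ℝ))) (hF : IsFan r F)
    (hsupp : ⋃₀ (F : Set (Set (Fin r → ℝ))) = Set.univ)
    (R : (Fin r → ℤ) → (Fin r → ℤ) → Prop)
    (hrefl : Reflexive R) (htrans : Transitive R) (htotal : ∀ m n, R m n ∨ R n m)
    (hadd : ∀ m n o, R m n → R (m + o) (n + o)) :
    ∃! σ : Set (Fin r → ℝ), σ ∈ F ∧
      (∀ m : Fin r → ℤ, (∀ v ∈ σ, 0 ≤ ∑ j, (m j : ℝ) * v j) → R 0 m) ∧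
      {m : Fin r → ℤ | ∀ v ∈ σ, ∑ j, (m j : ℝ) * v j = 0} =
        {m : Fin r → ℤ |
          (∀ v ∈ σ, 0 ≤ ∑ j, (m j : ℝ) * v j) ∧ R m 0 ∧ R 0 m} := by
  classical
  -- preorder basics
  have hadd0 : ∀ a b : Fin r → ℤ, R 0 a → R 0 b → R 0 (a + b) := by
    intro a b ha hb
    have h := hadd 0 a b ha
    rw [zero_add] at h
    exact htrans hb h
  have hneg0 : ∀ a : Fin r → ℤ, R 0 a → R (-a) 0 := by
    intro a ha
    have h := hadd 0 a (-a) ha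
    simpa using h
  have hrev : ∀ a : Fin r → ℤ, R a 0 → R 0 (-a) := by
    intro a ha
    have h := hadd a 0 (-a) ha
    simpa using h
  have hofneg : ∀ a : Fin r → ℤ, R 0 (-a) → R a 0 := by
    intro a ha
    have h := hadd 0 (-a) a ha
    simpa using h
  have hSPos_add : ∀ a b : Fin r → ℤ, (R 0 a ∧ ¬ R a 0) → R 0 b
      → (R 0 (a + b) ∧ ¬ R (a + b) 0) := by
    rintro a b ⟨ha1, ha2⟩ hb
    refine ⟨hadd0 a b ha1 hb, fun h => ha2 ?_⟩
    have h2 := hadd 0 b a hb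
    rw [zero_add] at h2
    have h3 : R a (a + b) := by rwa [add_comm b a] at h2
    exact htrans h3 h
  have hNull_add : ∀ a b : Fin r → ℤ, (R 0 a ∧ R a 0) → (R 0 b ∧ R b 0)
      → (R 0 (a + b) ∧ R (a + b) 0) := by
    rintro a b ⟨ha1, ha2⟩ ⟨hb1, hb2⟩
    refine ⟨hadd0 _ _ ha1 hb1, ?_⟩
    have h := hadd a 0 b ha2
    rw [zero_add] at h
    exact htrans h hb2
  have hNull_neg : ∀ a : Fin r → ℤ, (R 0 a ∧ R a 0) → (R 0 (-a) ∧ R (-a) 0) :=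
    fun a ⟨h1, h2⟩ => ⟨hrev a h2, hneg0 a h1⟩
  have hPos_nsmul : ∀ (N : ℕ) (a : Fin r → ℤ), R 0 a → R 0 ((N : ℤ) • a) := by
    intro N a ha
    induction N with
    | zero => rw [Nat.cast_zero, zero_smul]; exact hrefl 0
    | succ n ih =>
      have h : ((n + 1 : ℕ) : ℤ) • a = (n : ℤ) • a + a := by
        push_cast
        rw [add_smul, one_smul]
      rw [h]
      exact hadd0 _ _ ih ha
  have hPos_zsmul : ∀ (k : ℤ) (a : Fin r → ℤ), 0 ≤ k → R 0 a → R 0 (k • a) := by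
    intro k a hk ha
    have h := hPos_nsmul k.toNat a ha
    rwa [Int.toNat_of_nonneg hk] at h
  have hNull_nsmul : ∀ (N : ℕ) (a : Fin r → ℤ), (R 0 a ∧ R a 0)
      → (R 0 ((N : ℤ) • a) ∧ R ((N : ℤ) • a) 0) := by
    intro N a ha
    induction N with
    | zero => rw [Nat.cast_zero, zero_smul]; exact ⟨hrefl 0, hrefl 0⟩
    | succ n ih =>
      have h : ((n + 1 : ℕ) : ℤ) • a = (n : ℤ) • a + a := by
        push_cast
        rw [add_smul, one_smul]
      rw [h]
      exact hNull_add _ _ ih ha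
  have hNull_zsmul : ∀ (k : ℤ) (a : Fin r → ℤ), (R 0 a ∧ R a 0)
      → (R 0 (k • a) ∧ R (k • a) 0) := by
    intro k a ha
    rcases le_or_gt 0 k with hk | hk
    · have h := hNull_nsmul k.toNat a ha
      rwa [Int.toNat_of_nonneg hk] at h
    · have h := hNull_nsmul (-k).toNat a ha
      rw [Int.toNat_of_nonneg (by linarith : (0:ℤ) ≤ -k)] at h
      have h2 := hNull_neg _ h
      have h3 : -((-k) • a) = k • a := by rw [neg_smul, neg_neg]
      rwa [h3] at h2
  have hSPos_zsmul : ∀ (k : ℤ) (a : Fin r → ℤ), 0 < k → (R 0 a ∧ ¬ R a 0)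
      → (R 0 (k • a) ∧ ¬ R (k • a) 0) := by
    intro k a hk ha
    have key : ∀ N : ℕ, (R 0 (((N : ℤ) + 1) • a) ∧ ¬ R (((N : ℤ) + 1) • a) 0) := by
      intro N
      induction N with
      | zero => rw [show ((0 : ℕ) : ℤ) + 1 = 1 by norm_num, one_smul]; exact ha
      | succ n ih =>
        have h : (((n + 1 : ℕ) : ℤ) + 1) • a = ((n : ℤ) + 1) • a + a := by
          have e : (((n + 1 : ℕ) : ℤ) + 1) = ((n : ℤ) + 1) + 1 := by push_cast; ring
          rw [e, add_smul ((n : ℤ) + 1) 1 a, one_smul]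
        rw [h]
        exact hSPos_add _ _ ih ha.1
    have hk1 : k = ((k - 1).toNat : ℤ) + 1 := by
      rw [Int.toNat_of_nonneg (by linarith)]
      ring
    rw [hk1]
    exact key _
  have hPos_sum : ∀ {ν : Type} [Fintype ν] (f : ν → Fin r → ℤ),
      (∀ i, R 0 (f i)) → R 0 (∑ i, f i) := by
    intro ν _ f hf
    exact Finset.sum_induction f (fun z => R 0 z) (fun x y hx hy => hadd0 x y hx hy)
      (hrefl 0) (fun i _ => hf i)
  have hNull_sum : ∀ {ν : Type} [Fintype ν] (f : ν → Fin r → ℤ),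
      (∀ i, R 0 (f i) ∧ R (f i) 0) → (R 0 (∑ i, f i) ∧ R (∑ i, f i) 0) := by
    intro ν _ f hf
    exact Finset.sum_induction f (fun z => R 0 z ∧ R z 0)
      (fun x y hx hy => hNull_add x y hx hy) ⟨hrefl 0, hrefl 0⟩ (fun i _ => hf i)
  have hSPos_sum : ∀ {ν : Type} [Fintype ν] (f : ν → Fin r → ℤ) (i₀ : ν),
      (R 0 (f i₀) ∧ ¬ R (f i₀) 0) → (∀ i, R 0 (f i))
      → (R 0 (∑ i, f i) ∧ ¬ R (∑ i, f i) 0) := by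
    intro ν _ f i₀ hi₀ hf
    rw [← Finset.add_sum_erase _ f (Finset.mem_univ i₀)]
    refine hSPos_add _ _ hi₀ ?_
    exact Finset.sum_induction f (fun z => R 0 z) (fun x y hx hy => hadd0 x y hx hy)
      (hrefl 0) (fun i _ => hf i)
  -- enumeration of the lattice
  obtain ⟨e, he⟩ := exists_surjective_nat (Fin r → ℤ)
  -- stage systems
  have hstage : ∀ n : ℕ, ∃ w : Fin r → ℚ, ∀ i : Fin (n + 1),
      ((R 0 (e i) ∧ ¬ R (e i) 0) → 0 < ∑ j, (e i j : ℚ) * w j)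
      ∧ ((R 0 (e i) ∧ R (e i) 0) → (∑ j, (e i j : ℚ) * w j) = 0) := by
    intro n
    rcases rat_system (fun i : Fin (n + 1) => e i)
        (fun i => R 0 (e i) ∧ ¬ R (e i) 0) (fun i => R 0 (e i) ∧ R (e i) 0) with
      ⟨lam, mu, hlam0, ⟨i₀, hi₀sp, hi₀pos⟩, hlamz, hmuz, hid⟩ | ⟨y, hy⟩
    · exfalso
      have hzzero : ((∑ i, lam i • e (i : ℕ)) + (∑ i, mu i • e (i : ℕ)) : Fin r → ℤ) = 0 := by
        funext j
        show (∑ i, lam i • e (i : ℕ)) j + (∑ i, mu i • e (i : ℕ)) j = 0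
        rw [Finset.sum_apply, Finset.sum_apply]
        simp only [Pi.smul_apply, smul_eq_mul]
        exact hid j
      have hterm1pos : ∀ i : Fin (n + 1), R 0 (lam i • e (i : ℕ)) := by
        intro i
        by_cases hsp : R 0 (e (i : ℕ)) ∧ ¬ R (e (i : ℕ)) 0
        · exact hPos_zsmul (lam i) (e i) (hlam0 i) hsp.1
        · rw [hlamz i hsp, zero_smul]
          exact hrefl 0
      have hfirst := hSPos_sum (fun i : Fin (n + 1) => lam i • e (i : ℕ)) i₀
        (hSPos_zsmul _ _ hi₀pos hi₀sp) hterm1pos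
      have hterm2null : ∀ i : Fin (n + 1), R 0 (mu i • e (i : ℕ)) ∧ R (mu i • e (i : ℕ)) 0 := by
        intro i
        by_cases hnp : R 0 (e (i : ℕ)) ∧ R (e (i : ℕ)) 0
        · exact hNull_zsmul (mu i) (e i) hnp
        · rw [hmuz i hnp, zero_smul]
          exact ⟨hrefl 0, hrefl 0⟩
      have hsecond := hNull_sum (fun i : Fin (n + 1) => mu i • e (i : ℕ)) hterm2null
      have hzspos := hSPos_add _ _ hfirst hsecond.1
      rw [hzzero] at hzspos
      exact hzspos.2 (hrefl 0)
    · exact ⟨y, fun i => ⟨(hy i).1, (hy i).2⟩⟩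
  choose wQ hwQ using hstage
  set wR : ℕ → (Fin r → ℝ) := fun n j => ((wQ n j : ℚ) : ℝ) with hwRdef
  have hbridge : ∀ (m : Fin r → ℤ) (n : ℕ), dotR (castV m) (wR n)
      = (((∑ j, (m j : ℚ) * wQ n j : ℚ)) : ℝ) := by
    intro m n
    show (∑ j, (m j : ℝ) * ((wQ n j : ℚ) : ℝ)) = _
    push_cast
    rfl
  have hSPfact : ∀ (m : Fin r → ℤ) (n i : ℕ), e i = m → i ≤ n →
      (R 0 m ∧ ¬ R m 0) → 0 < dotR (castV m) (wR n) := by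
    intro m n i hei hin hsp
    have h := (hwQ n ⟨i, Nat.lt_succ_of_le hin⟩).1 (by rw [show ((⟨i, Nat.lt_succ_of_le hin⟩ : Fin (n+1)) : ℕ) = i from rfl, hei]; exact hsp)
    rw [hbridge]
    have h' : (0:ℚ) < ∑ j, (m j : ℚ) * wQ n j := by
      rw [show ((⟨i, Nat.lt_succ_of_le hin⟩ : Fin (n+1)) : ℕ) = i from rfl, hei] at h
      exact h
    exact_mod_cast h'
  have hNullfact : ∀ (m : Fin r → ℤ) (n i : ℕ), e i = m → i ≤ n →
      (R 0 m ∧ R m 0) → dotR (castV m) (wR n) = 0 := by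
    intro m n i hei hin hnp
    have h := (hwQ n ⟨i, Nat.lt_succ_of_le hin⟩).2 (by rw [show ((⟨i, Nat.lt_succ_of_le hin⟩ : Fin (n+1)) : ℕ) = i from rfl, hei]; exact hnp)
    rw [hbridge]
    have h' : (∑ j, (m j : ℚ) * wQ n j) = 0 := by
      rw [show ((⟨i, Nat.lt_succ_of_le hin⟩ : Fin (n+1)) : ℕ) = i from rfl, hei] at h
      exact h
    exact_mod_cast h'
  -- minimal cones containing the wR n
  have hmins : ∀ n : ℕ, ∃ σ₀, σ₀ ∈ F ∧ wR n ∈ σ₀ ∧ ∀ τ ∈ F, wR n ∈ τ → σ₀ ⊆ τ := by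
    intro n
    have hx : wR n ∈ ⋃₀ (F : Set (Set (Fin r → ℝ))) := by
      rw [hsupp]; trivial
    obtain ⟨σ, hσ, hmem⟩ := Set.mem_sUnion.mp hx
    obtain ⟨σ₀, h1, h2, h3⟩ := exists_min_cone hF (wR n) ⟨σ, Finset.mem_coe.mp hσ, hmem⟩
    exact ⟨σ₀, h1, h2, h3⟩
  choose σm hσm using hmins
  -- pigeonhole
  obtain ⟨σb, hinf⟩ := Finite.exists_infinite_fiber
    (fun n : ℕ => (⟨σm n, (hσm n).1⟩ : {s // s ∈ F}))
  have hinf' : ((fun n : ℕ => (⟨σm n, (hσm n).1⟩ : {s // s ∈ F})) ⁻¹' {σb}).Infinite :=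
    Set.infinite_coe_iff.mp hinf
  set sig : Set (Fin r → ℝ) := σb.1 with hsigdef
  have hsigF : sig ∈ F := σb.2
  have hNprop : ∀ k : ℕ, ∃ n, k ≤ n ∧ σm n = sig := by
    intro k
    by_contra hcon
    push_neg at hcon
    apply hinf'
    apply Set.Finite.subset (Set.finite_Iio k)
    intro n hn
    have hn2 : (⟨σm n, (hσm n).1⟩ : {s // s ∈ F}) = σb :=
      Set.mem_singleton_iff.mp (Set.mem_preimage.mp hn)
    have hn' : σm n = sig := congrArg Subtype.val hn2
    rw [Set.mem_Iio]
    by_contra hnk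
    exact hcon n (not_lt.mp hnk) hn'
  -- property A
  have condA : ∀ m : Fin r → ℤ, (∀ v ∈ sig, 0 ≤ ∑ j, (m j : ℝ) * v j) → R 0 m := by
    intro m hm
    by_contra hR0m
    have hm0 : R m 0 := (htotal m 0).resolve_right hR0m
    have hspneg : R 0 (-m) ∧ ¬ R (-m) 0 := by
      refine ⟨hrev m hm0, fun h => hR0m ?_⟩
      have h2 := hadd (-m) 0 m h
      simpa using h2
    obtain ⟨i, hi⟩ := he (-m)
    obtain ⟨n, hin, hσn⟩ := hNprop i
    have hpos := hSPfact (-m) n i hi hin hspneg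
    have hflip : castV (-m) = -(castV m) := by
      funext j
      show ((-m) j : ℝ) = -(m j : ℝ)
      rw [Pi.neg_apply]
      push_cast
      ring
    rw [hflip, dotR_neg_left] at hpos
    have hwmem : wR n ∈ sig := by rw [← hσn]; exact (hσm n).2.1
    have hge : 0 ≤ dotR (castV m) (wR n) := hm (wR n) hwmem
    linarith
  -- property B
  have condB : {m : Fin r → ℤ | ∀ v ∈ sig, (∑ j, (m j : ℝ) * v j) = 0} =
      {m : Fin r → ℤ | (∀ v ∈ sig, 0 ≤ ∑ j, (m j : ℝ) * v j) ∧ R m 0 ∧ R 0 m} := by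
    ext m
    simp only [Set.mem_setOf_eq]
    constructor
    · intro hm
      have hge : ∀ v ∈ sig, 0 ≤ ∑ j, (m j : ℝ) * v j :=
        fun v hv => le_of_eq (hm v hv).symm
      refine ⟨hge, ?_, condA m hge⟩
      have hnegR : R 0 (-m) := by
        apply condA (-m)
        intro v hv
        have hflip : (∑ j, ((-m) j : ℝ) * v j) = -(∑ j, (m j : ℝ) * v j) := by
          rw [← Finset.sum_neg_distrib]
          apply Finset.sum_congr rfl
          intro j _
          rw [Pi.neg_apply]
          push_cast
          ring
        rw [hflip, hm v hv, neg_zero]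
      exact hofneg m hnegR
    · rintro ⟨hge, hm0, h0m⟩
      obtain ⟨i, hi⟩ := he m
      obtain ⟨n, hin, hσn⟩ := hNprop i
      have hz : dotR (castV m) (wR n) = 0 := hNullfact m n i hi hin ⟨h0m, hm0⟩
      have hfmem : {v ∈ sig | dotR (castV m) v = 0} ∈ F := face_mem hF hsigF m hge
      have hwmem : wR n ∈ {v ∈ sig | dotR (castV m) v = 0} :=
        ⟨by rw [← hσn]; exact (hσm n).2.1, hz⟩
      have hsub : sig ⊆ {v ∈ sig | dotR (castV m) v = 0} := by
        have h4 := (hσm n).2.2 {v ∈ sig | dotR (castV m) v = 0} hfmem hwmem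
        rwa [hσn] at h4
      intro v hv
      exact (hsub hv).2
  refine ⟨sig, ⟨hsigF, condA, condB⟩, ?_⟩
  -- uniqueness
  rintro τ ⟨hτF, hAτ, hBτ⟩
  obtain ⟨T, hT⟩ := (hF.1 τ hτF).1
  have hτr : τ = rcone (T.image castV) := by rw [hT, coneOf_eq_rcone]
  obtain ⟨U, hUrat, hUdual, hUdesc⟩ := rcone_dual (T.image castV) (fun t ht => by
    obtain ⟨s, _, rfl⟩ := Finset.mem_image.mp ht
    exact castV_ratVec s)
  have hueven : ∀ u ∈ U, ∃ i : ℕ, ∀ n : ℕ, i ≤ n → σm n = sig → 0 ≤ dotR u (wR n) := by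
    intro u hu
    obtain ⟨m, d, hdpos, hscale⟩ := ratVec_scale (hUrat u hu)
    have hdR : (0:ℝ) < (d : ℝ) := by exact_mod_cast hdpos
    have hmdual : ∀ v ∈ τ, 0 ≤ ∑ j, (m j : ℝ) * v j := by
      intro v hv
      have h1 : 0 ≤ dotR u v := hUdual u hu v (by rw [← hτr]; exact hv)
      show 0 ≤ dotR (castV m) v
      rw [hscale, dotR_smul_left]
      exact mul_nonneg (le_of_lt hdR) h1
    have hR0m : R 0 m := hAτ m hmdual
    obtain ⟨i, hi⟩ := he m
    refine ⟨i, fun n hin hσ => ?_⟩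
    have hnn : 0 ≤ dotR (castV m) (wR n) := by
      by_cases hm0 : R m 0
      · rw [hNullfact m n i hi hin ⟨hR0m, hm0⟩]
      · exact le_of_lt (hSPfact m n i hi hin ⟨hR0m, hm0⟩)
    rw [hscale, dotR_smul_left] at hnn
    nlinarith
  choose iU hiU using hueven
  obtain ⟨n, hnge, hneq⟩ := hNprop (U.attach.sup (fun u => iU u.1 u.2))
  have hwnτ : wR n ∈ τ := by
    rw [hτr, hUdesc]
    intro u hu
    refine hiU u hu n (le_trans ?_ hnge) hneq
    exact Finset.le_sup (f := fun u : {x // x ∈ U} => iU u.1 u.2) (Finset.mem_attach U ⟨u, hu⟩)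
  have hsub : sig ⊆ τ := by
    rw [← hneq]
    exact (hσm n).2.2 τ hτF hwnτ
  by_cases hEq : τ = sig
  · exact hEq
  exfalso
  obtain ⟨_, u₂, hu₂nn, hu₂eq⟩ := (hF.2.2 τ hτF sig hsigF).1
  have hint : τ ∩ sig = sig := Set.inter_eq_self_of_subset_right hsub
  rw [hint] at hu₂eq
  rcases rat_system (fun t : {t // t ∈ T} => (t : Fin r → ℤ))
      (fun t => ¬ dotR u₂ (castV (t : Fin r → ℤ)) = 0)
      (fun t => dotR u₂ (castV (t : Fin r → ℤ)) = 0) with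
    ⟨lam, mu, hlam0, ⟨t₀, ht₀ne, ht₀pos⟩, hlamz, hmuz, hid⟩ | ⟨y, hy⟩
  · have hdot := cert_dot u₂ (fun t : {t // t ∈ T} => (t : Fin r → ℤ))
      (fun t : {t // t ∈ T} => (t : Fin r → ℤ)) lam mu hid
    have hgen : ∀ t : {t // t ∈ T}, castV (t : Fin r → ℤ) ∈ τ := fun t => by
      rw [hτr]
      exact mem_rcone_of_mem (Finset.mem_image_of_mem castV t.2)
    have hgen0 : ∀ t : {t // t ∈ T}, 0 ≤ dotR u₂ (castV (t : Fin r → ℤ)) :=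
      fun t => hu₂nn _ (hgen t)
    have h2 : (∑ t : {t // t ∈ T}, (mu t : ℝ) * dotR u₂ (castV (t : Fin r → ℤ))) = 0 := by
      apply Finset.sum_eq_zero
      intro t _
      by_cases h : dotR u₂ (castV (t : Fin r → ℤ)) = 0
      · rw [h, mul_zero]
      · rw [hmuz t h]
        simp
    have h1 : 0 < ∑ t : {t // t ∈ T}, (lam t : ℝ) * dotR u₂ (castV (t : Fin r → ℤ)) := by
      apply Finset.sum_pos'
      · intro t _
        exact mul_nonneg (by exact_mod_cast hlam0 t) (hgen0 t)
      · refine ⟨t₀, Finset.mem_univ t₀, ?_⟩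
        have hl : (0:ℝ) < (lam t₀ : ℝ) := by exact_mod_cast ht₀pos
        exact mul_pos hl (lt_of_le_of_ne (hgen0 t₀) (Ne.symm ht₀ne))
    linarith
  · obtain ⟨d, m₂, hdpos, hm₂cast⟩ := int_scale y
    have hdQ : (0:ℚ) < (d:ℚ) := by exact_mod_cast hdpos
    have hm₂dot : ∀ t : Fin r → ℤ, dotR (castV m₂) (castV t)
        = (((d:ℚ) * ∑ j, (t j : ℚ) * y j : ℚ) : ℝ) := by
      intro t
      show (∑ j, (m₂ j : ℝ) * (t j : ℝ)) = _
      have : (∑ j, (m₂ j : ℚ) * (t j : ℚ)) = (d:ℚ) * ∑ j, (t j : ℚ) * y j := by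
        rw [Finset.mul_sum]
        apply Finset.sum_congr rfl
        intro j _
        rw [hm₂cast j]
        ring
      rw [← this]
      push_cast
      rfl
    have hm₂pos : ∀ t : {t // t ∈ T}, ¬ dotR u₂ (castV (t : Fin r → ℤ)) = 0
        → 0 < dotR (castV m₂) (castV (t : Fin r → ℤ)) := by
      intro t ht
      rw [hm₂dot]
      have := (hy t).1 ht
      have h' : (0:ℚ) < (d:ℚ) * ∑ j, ((t : Fin r → ℤ) j : ℚ) * y j := mul_pos hdQ this
      exact_mod_cast h'
    have hm₂zero : ∀ t : {t // t ∈ T}, dotR u₂ (castV (t : Fin r → ℤ)) = 0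
        → dotR (castV m₂) (castV (t : Fin r → ℤ)) = 0 := by
      intro t ht
      rw [hm₂dot]
      have := (hy t).2 ht
      rw [this, mul_zero]
      simp
    have hm₂nn : ∀ v ∈ τ, 0 ≤ dotR (castV m₂) v := by
      intro v hv
      rw [hτr] at hv
      apply dotR_nonneg_of_mem_rcone _ hv
      intro w hw
      obtain ⟨t, htT, rfl⟩ := Finset.mem_image.mp hw
      by_cases h : dotR u₂ (castV t) = 0
      · exact le_of_eq (hm₂zero ⟨t, htT⟩ h).symm
      · exact le_of_lt (hm₂pos ⟨t, htT⟩ h)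
    have hτgen : ∀ w ∈ T.image castV, 0 ≤ dotR u₂ w := by
      intro w hw
      apply hu₂nn
      rw [hτr]
      exact mem_rcone_of_mem hw
    have hτgen₂ : ∀ w ∈ T.image castV, 0 ≤ dotR (castV m₂) w := by
      intro w hw
      obtain ⟨t, htT, rfl⟩ := Finset.mem_image.mp hw
      by_cases h : dotR u₂ (castV t) = 0
      · exact le_of_eq (hm₂zero ⟨t, htT⟩ h).symm
      · exact le_of_lt (hm₂pos ⟨t, htT⟩ h)
    have hfilter : (T.image castV).filter (fun w => dotR (castV m₂) w = 0)
        = (T.image castV).filter (fun w => dotR u₂ w = 0) := by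
      ext w
      simp only [Finset.mem_filter]
      constructor
      · rintro ⟨hw, h⟩
        refine ⟨hw, ?_⟩
        by_contra hne
        obtain ⟨t, htT, rfl⟩ := Finset.mem_image.mp hw
        have := hm₂pos ⟨t, htT⟩ hne
        linarith
      · rintro ⟨hw, h⟩
        obtain ⟨t, htT, rfl⟩ := Finset.mem_image.mp hw
        exact ⟨hw, hm₂zero ⟨t, htT⟩ h⟩
    have hzeroset : {v ∈ τ | dotR (castV m₂) v = 0} = sig := by
      rw [hu₂eq]
      have e1 : {v ∈ τ | dotR (castV m₂) v = 0}
          = {x | x ∈ rcone (T.image castV) ∧ dotR (castV m₂) x = 0} := by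
        rw [hτr]
      have e2 : {v ∈ τ | (∑ j, u₂ j * v j) = 0}
          = {x | x ∈ rcone (T.image castV) ∧ dotR u₂ x = 0} := by
        rw [hτr]
        rfl
      rw [e1, e2, rcone_face _ _ hτgen₂, rcone_face _ _ hτgen, hfilter]
    have hR0m₂ : R 0 m₂ := hAτ m₂ hm₂nn
    obtain ⟨v₀, hv₀τ, hv₀⟩ : ∃ v₀ ∈ τ, v₀ ∉ sig := by
      by_contra h
      push_neg at h
      exact hEq (Set.Subset.antisymm h hsub)
    have hv₀ne : ¬ dotR (castV m₂) v₀ = 0 := fun h => hv₀ (by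
      rw [← hzeroset]
      exact ⟨hv₀τ, h⟩)
    have hnotL : m₂ ∉ {m : Fin r → ℤ | ∀ v ∈ τ, (∑ j, (m j : ℝ) * v j) = 0} :=
      fun h => hv₀ne (h v₀ hv₀τ)
    have hnotR : m₂ ∉ {m : Fin r → ℤ |
        (∀ v ∈ τ, 0 ≤ ∑ j, (m j : ℝ) * v j) ∧ R m 0 ∧ R 0 m} := by
      rw [← hBτ]
      exact hnotL
    have hnRm₂0 : ¬ R m₂ 0 := by
      intro h
      exact hnotR ⟨hm₂nn, h, hR0m₂⟩
    have hinL : ∀ v ∈ sig, (∑ j, (m₂ j : ℝ) * v j) = 0 := by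
      intro v hv
      have : v ∈ {v ∈ τ | dotR (castV m₂) v = 0} := by rw [hzeroset]; exact hv
      exact this.2
    have : R m₂ 0 := by
      have hmem : m₂ ∈ {m : Fin r → ℤ | ∀ v ∈ sig, (∑ j, (m j : ℝ) * v j) = 0} := hinL
      rw [condB] at hmem
      exact hmem.2.1
    exact hnRm₂0 this
end
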